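/- arXiv:1403.5722 — 6 statements merged into one kernel-verified Lean document; each statement's English description precedes it below -/
import Mathlib

section
/- Fix α ∈ (0, 1/2). Let (W_k^n)_{n≥0, 0≤k<2^n} be real numbers and set V^n = max_{0≤k<2^n} |W_k^n|. Suppose Σ_{n=0}^∞ 2^{−n(1/2−α)} V^n < ∞. Then the series Z(t) = Σ_{n=0}^∞ Σ_{k=0}^{2^n−1} W_k^n ∫_0^t H_k^n(s) ds converges uniformly on [0,1], and the resulting function Z satisfies sup_{0≤s<t≤1} |Z(t)−Z(s)|/(t−s)^α ≤ 2^{2α} Σ_{n=0}^∞ 2^{−n(1/2−α)} V^n. -/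
open MeasureTheory Filter Finset

/-- The Haar step function: `1` on `[0,1/2)`, `−1` on `[1/2,1]`, `0` otherwise. -/
noncomputable def haar (t : ℝ) : ℝ :=
  if 0 ≤ t ∧ t < 1 / 2 then 1 else if 1 / 2 ≤ t ∧ t ≤ 1 then -1 else 0

/-- The Haar family: `H₀⁰ = 1` on `[0,1]`, and for `n ≥ 1`, `Hₖⁿ(t) = 2^{n/2} H(2ⁿ t − k)`. -/
noncomputable def haarFn (n k : ℕ) (t : ℝ) : ℝ :=
  if n = 0 then (if 0 ≤ t ∧ t ≤ 1 then 1 else 0)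
  else 2 ^ ((n : ℝ) / 2) * haar (2 ^ n * t - k)

/-- The Schauder functions of the Lévy–Ciesielski construction: `t ↦ ∫₀ᵗ Hₖⁿ(s) ds`. -/
noncomputable def schauder (n k : ℕ) (t : ℝ) : ℝ := ∫ s in (0 : ℝ)..t, haarFn n k s

lemma haar_abs_le (t : ℝ) : |haar t| ≤ 1 := by
  unfold haar; split_ifs <;> simp

lemma haar_neg {t : ℝ} (h : t < 0) : haar t = 0 := by
  unfold haar; split_ifs with h1 h2 <;> [linarith [h1.1]; linarith [h2.1]; rfl]

lemma haar_gt {t : ℝ} (h : 1 < t) : haar t = 0 := by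
  unfold haar; split_ifs with h1 h2 <;> [linarith [h1.2]; linarith [h2.2]; rfl]

lemma measurable_haar : Measurable haar := by
  unfold haar
  refine Measurable.ite ?_ measurable_const (Measurable.ite ?_ measurable_const measurable_const)
  · exact measurableSet_Ico
  · exact measurableSet_Icc

lemma measurable_haarFn (n k : ℕ) : Measurable (haarFn n k) := by
  unfold haarFn
  split_ifs
  · exact Measurable.ite measurableSet_Icc measurable_const measurable_const
  · exact (measurable_haar.comp ((measurable_id.const_mul _).sub measurable_const)).const_mul _

lemma rpow_half_pos (n : ℕ) : (0:ℝ) < 2 ^ ((n : ℝ) / 2) := Real.rpow_pos_of_pos two_pos _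

lemma haarFn_abs_le (n k : ℕ) (t : ℝ) : |haarFn n k t| ≤ 2 ^ ((n : ℝ) / 2) := by
  unfold haarFn
  split_ifs with h h2
  · subst h; norm_num
  · subst h; simpa using (rpow_half_pos 0).le
  · rw [abs_mul, abs_of_pos (rpow_half_pos n)]
    calc 2 ^ ((n:ℝ)/2) * |haar (2 ^ n * t - k)| ≤ 2 ^ ((n:ℝ)/2) * 1 :=
          mul_le_mul_of_nonneg_left (haar_abs_le _) (rpow_half_pos n).le
      _ = _ := mul_one _

lemma haarFn_intervalIntegrable (n k : ℕ) (a b : ℝ) :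
    IntervalIntegrable (haarFn n k) volume a b := by
  rw [intervalIntegrable_iff]
  refine Integrable.mono' (g := fun _ => (2:ℝ) ^ ((n:ℝ)/2))
    (integrableOn_const measure_Ioc_lt_top.ne) 
    ((measurable_haarFn n k).aestronglyMeasurable) ?_
  exact ae_of_all _ fun x => by simpa [Real.norm_eq_abs] using haarFn_abs_le n k x

noncomputable def G (x : ℝ) : ℝ := max 0 (min x (1 - x))


lemma G_nonneg (x : ℝ) : 0 ≤ G x := le_max_left _ _
lemma G_le_half (x : ℝ) : G x ≤ 1/2 := by
  unfold G
  rcases le_total x (1/2) with h | h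
  · exact max_le (by norm_num) (le_trans (min_le_left _ _) h)
  · exact max_le (by norm_num) (le_trans (min_le_right _ _) (by linarith))
lemma G_eq_zero_of_nonpos {x : ℝ} (h : x ≤ 0) : G x = 0 :=
  max_eq_left (le_trans (min_le_left _ _) h)
lemma G_eq_zero_of_one_le {x : ℝ} (h : 1 ≤ x) : G x = 0 :=
  max_eq_left (le_trans (min_le_right _ _) (by linarith))
lemma G_eq_left {x : ℝ} (h0 : 0 ≤ x) (h : x ≤ 1/2) : G x = x := by
  unfold G; rw [min_eq_left (by linarith), max_eq_right h0]
lemma G_eq_right {x : ℝ} (h0 : 1/2 ≤ x) (h : x ≤ 1) : G x = 1 - x := by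
  unfold G; rw [min_eq_right (by linarith), max_eq_right (by linarith)]
lemma continuous_G : Continuous G :=
  continuous_const.max (continuous_id.min (continuous_const.sub continuous_id))

/-- The candidate primitive of `haarFn n k`. -/
noncomputable def Fp (n k : ℕ) (x : ℝ) : ℝ :=
  2 ^ ((n : ℝ) / 2) * ((2:ℝ) ^ n)⁻¹ * G (2 ^ n * x - k)

lemma continuous_Fp (n k : ℕ) : Continuous (Fp n k) := by
  unfold Fp
  exact continuous_const.mul (continuous_G.comp ((continuous_const.mul continuous_id).sub continuous_const))

lemma Fp_hasDerivWithinAt (n k : ℕ) (hn : n ≠ 0) {x : ℝ}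
    (hx : 2 ^ n * x - (k:ℝ) ≠ 1) :
    HasDerivWithinAt (Fp n k) (haarFn n k x) (Set.Ioi x) x := by
  set c : ℝ := 2 ^ n with hc
  have hcpos : (0:ℝ) < c := by positivity
  set r : ℝ := 2 ^ ((n:ℝ)/2) with hr
  set z : ℝ := c * x - k with hz
  have hbase : haarFn n k x = r * haar z := by simp [haarFn, hn]; rfl
  rcases lt_or_ge z 0 with h0 | h0
  · -- z < 0 : F is 0 near x on the right
    have hev : ∀ᶠ y in nhdsWithin x (Set.Ioi x), Fp n k y = 0 := by
      have hxa : x < (k:ℝ)/c := by rw [lt_div_iff₀ hcpos]; linarith [mul_comm c x]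
      filter_upwards [(eventually_lt_nhds hxa).filter_mono nhdsWithin_le_nhds] with y hy
      have : c * y - k ≤ 0 := by
        have := (lt_div_iff₀ hcpos).1 hy
        nlinarith
      simp [Fp, G_eq_zero_of_nonpos this, ← hc]
    have h1 : HasDerivWithinAt (fun _ : ℝ => (0:ℝ)) 0 (Set.Ioi x) x :=
      (hasDerivAt_const x (0:ℝ)).hasDerivWithinAt
    have := h1.congr_of_eventuallyEq hev (by simp [Fp, G_eq_zero_of_nonpos h0.le, ← hc, ← hz])
    simpa [hbase, haar_neg h0] using this
  · rcases lt_or_ge z (1/2) with h1 | h1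
    · -- 0 ≤ z < 1/2 : F is linear increasing near x
      have key : ∀ y : ℝ, x ≤ y → c * y - k < 1/2 → Fp n k y = r * c⁻¹ * (c * y - k) := by
        intro y hy hy2
        have h0' : 0 ≤ c * y - k := by nlinarith
        simp only [Fp, ← hc, ← hr]
        rw [G_eq_left h0' hy2.le]
      have hev : ∀ᶠ y in nhdsWithin x (Set.Ioi x),
          Fp n k y = r * c⁻¹ * (c * y - k) := by
        have hxa : x < ((k:ℝ) + 1/2)/c := by rw [lt_div_iff₀ hcpos]; nlinarith
        filter_upwards [(eventually_lt_nhds hxa).filter_mono nhdsWithin_le_nhds,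
          eventually_mem_nhdsWithin] with y hy hy'
        have : c * y - k < 1/2 := by
          have := (lt_div_iff₀ hcpos).1 hy; nlinarith
        exact key y (le_of_lt hy') this
      have hmodel : HasDerivAt (fun y => r * c⁻¹ * (c * y - (k:ℝ))) (r * c⁻¹ * c) x := by
        simpa using (((hasDerivAt_id x).const_mul c).sub_const (k:ℝ)).const_mul (r * c⁻¹)
      have hval : r * c⁻¹ * c = r := by field_simp
      have := (hmodel.hasDerivWithinAt (s := Set.Ioi x)).congr_of_eventuallyEq hev
        (key x le_rfl (by linarith))
      rw [hval] at this
      have hhaar : haar z = 1 := by unfold haar; rw [if_pos ⟨h0, h1⟩]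
      simpa [hbase, hhaar] using this
    · rcases lt_or_ge z 1 with h2 | h2
      · -- 1/2 ≤ z < 1 : F is linear decreasing near x
        have key : ∀ y : ℝ, x ≤ y → c * y - k < 1 →
            Fp n k y = r * c⁻¹ * (1 - (c * y - k)) := by
          intro y hy hy2
          have h0' : 1/2 ≤ c * y - k := by nlinarith
          simp only [Fp, ← hc, ← hr]
          rw [G_eq_right h0' hy2.le]
        have hev : ∀ᶠ y in nhdsWithin x (Set.Ioi x),
            Fp n k y = r * c⁻¹ * (1 - (c * y - k)) := by
          have hxa : x < ((k:ℝ) + 1)/c := by rw [lt_div_iff₀ hcpos]; nlinarith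
          filter_upwards [(eventually_lt_nhds hxa).filter_mono nhdsWithin_le_nhds,
            eventually_mem_nhdsWithin] with y hy hy'
          have : c * y - k < 1 := by
            have := (lt_div_iff₀ hcpos).1 hy; nlinarith
          exact key y (le_of_lt hy') this
        have hmodel : HasDerivAt (fun y => r * c⁻¹ * (1 - (c * y - (k:ℝ))))
            (r * c⁻¹ * (-c)) x := by
          have := ((((hasDerivAt_id x).const_mul c).sub_const (k:ℝ)).const_sub 1).const_mul
            (r * c⁻¹)
          simpa using this
        have hval : r * c⁻¹ * (-c) = -r := by field_simp
        have := (hmodel.hasDerivWithinAt (s := Set.Ioi x)).congr_of_eventuallyEq hev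
          (key x le_rfl h2)
        rw [hval] at this
        have hhaar : haar z = -1 := by
          unfold haar; rw [if_neg (by push_neg; intro _; linarith), if_pos ⟨h1, h2.le⟩]
        simpa [hbase, hhaar] using this
      · -- z > 1 : F is 0 near x on the right
        have h2' : 1 < z := lt_of_le_of_ne h2 (Ne.symm hx)
        have key : ∀ y : ℝ, x ≤ y → Fp n k y = 0 := by
          intro y hy
          have : 1 ≤ c * y - k := by nlinarith
          simp [Fp, G_eq_zero_of_one_le this, ← hc]
        have hev : ∀ᶠ y in nhdsWithin x (Set.Ioi x), Fp n k y = 0 :=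
          eventually_mem_nhdsWithin.mono fun y hy => key y (le_of_lt hy)
        have h1 : HasDerivWithinAt (fun _ : ℝ => (0:ℝ)) 0 (Set.Ioi x) x :=
          (hasDerivAt_const x (0:ℝ)).hasDerivWithinAt
        have := h1.congr_of_eventuallyEq hev (key x le_rfl)
        simpa [hbase, haar_gt h2'] using this

lemma integral_haarFn (n k : ℕ) (hn : n ≠ 0) {u v : ℝ} (huv : u ≤ v)
    (h : ((k:ℝ) + 1) / 2 ^ n ∉ Set.Ioo u v) :
    ∫ s in u..v, haarFn n k s = Fp n k v - Fp n k u := by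
  refine intervalIntegral.integral_eq_sub_of_hasDeriv_right_of_le huv
    ((continuous_Fp n k).continuousOn) (fun x hx => ?_) (haarFn_intervalIntegrable n k u v)
  refine Fp_hasDerivWithinAt n k hn (fun hbad => h ?_)
  have hcpos : (0:ℝ) < 2 ^ n := by positivity
  have : x = ((k:ℝ) + 1) / 2 ^ n := by field_simp; linarith
  rwa [← this]

lemma Fp_zero (n k : ℕ) : Fp n k 0 = 0 := by
  unfold Fp
  rw [show (2:ℝ) ^ n * 0 - (k:ℝ) = -(k:ℝ) by ring,
    G_eq_zero_of_nonpos (by simp : -(k:ℝ) ≤ 0), mul_zero]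

lemma schauder_eq (n k : ℕ) (hn : n ≠ 0) (t : ℝ) : schauder n k t = Fp n k t := by
  set b : ℝ := ((k:ℝ) + 1) / 2 ^ n with hb
  have hcpos : (0:ℝ) < 2 ^ n := by positivity
  have hbpos : 0 < b := by positivity
  unfold schauder
  rcases le_total t 0 with ht | ht
  · rw [intervalIntegral.integral_symm,
      integral_haarFn n k hn ht (fun hm => absurd hm.2 (by push_neg; linarith)),
      Fp_zero]
    ring_nf
  · rcases le_total t b with htb | htb
    · rw [integral_haarFn n k hn ht (fun hm => absurd hm.2 (by push_neg; linarith)), Fp_zero,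
        sub_zero]
    · rw [← intervalIntegral.integral_add_adjacent_intervals
        (haarFn_intervalIntegrable n k 0 b) (haarFn_intervalIntegrable n k b t),
        integral_haarFn n k hn hbpos.le (fun hm => absurd hm.2 (by push_neg; exact le_refl b)),
        integral_haarFn n k hn htb (fun hm => absurd hm.1 (by push_neg; exact le_refl b)),
        Fp_zero]
      ring

lemma schauder_abs_le (n k : ℕ) (hn : n ≠ 0) (t : ℝ) :
    |schauder n k t| ≤ 2 ^ ((n:ℝ)/2) * ((2:ℝ) ^ n)⁻¹ * (1/2) := by
  rw [schauder_eq n k hn t]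
  have h1 : (0:ℝ) ≤ 2 ^ ((n:ℝ)/2) * ((2:ℝ) ^ n)⁻¹ := by positivity
  rw [Fp, abs_mul, abs_of_nonneg h1, abs_of_nonneg (G_nonneg _)]
  exact mul_le_mul_of_nonneg_left (G_le_half _) h1

lemma schauder_eq_zero_left (n k : ℕ) (hn : n ≠ 0) {t : ℝ} (h : t ≤ (k:ℝ) / 2 ^ n) :
    schauder n k t = 0 := by
  rw [schauder_eq n k hn t, Fp, G_eq_zero_of_nonpos, mul_zero]
  have hcpos : (0:ℝ) < 2 ^ n := by positivity
  have h2 : 2 ^ n * t ≤ (k:ℝ) := by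
    have := mul_le_mul_of_nonneg_left h hcpos.le
    rwa [mul_div_cancel₀ _ (ne_of_gt hcpos)] at this
  linarith

lemma schauder_eq_zero_right (n k : ℕ) (hn : n ≠ 0) {t : ℝ} (h : ((k:ℝ) + 1) / 2 ^ n ≤ t) :
    schauder n k t = 0 := by
  rw [schauder_eq n k hn t, Fp, G_eq_zero_of_one_le, mul_zero]
  have hcpos : (0:ℝ) < 2 ^ n := by positivity
  have := (div_le_iff₀ hcpos).1 h
  nlinarith

lemma schauder_zero_eq {t : ℝ} (h0 : 0 ≤ t) (h1 : t ≤ 1) : schauder 0 0 t = t := by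
  unfold schauder
  have heq : Set.EqOn (haarFn 0 0) (fun _ => (1:ℝ)) (Set.uIcc 0 t) := by
    intro s hs
    rw [Set.uIcc_of_le h0] at hs
    simp [haarFn, hs.1, le_trans hs.2 h1]
  rw [intervalIntegral.integral_congr heq, intervalIntegral.integral_const]
  simp

lemma pow_half_inv (n : ℕ) :
    (2:ℝ) ^ ((n:ℝ)/2) * ((2:ℝ)^n)⁻¹ * (1/2) = 2 ^ (-(n:ℝ)/2 - 1) := by
  rw [← Real.rpow_natCast 2 n, ← Real.rpow_neg two_pos.le,
    show (1:ℝ)/2 = 2^(-1:ℝ) by rw [Real.rpow_neg_one]; norm_num,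
    ← Real.rpow_add two_pos, ← Real.rpow_add two_pos]
  ring_nf


/-- **Lemma (wavelet bound on the α-Hölder norm).**
Fix `α ∈ (0,1/2)`. Let `(Wₖⁿ)` be real numbers and `Vⁿ = max_{0 ≤ k < 2ⁿ} |Wₖⁿ|`. If
`Σₙ 2^{−n(1/2−α)} Vⁿ < ∞`, then the Lévy–Ciesielski series converges uniformly on `[0,1]`
to some `Z`, which satisfies `|Z(t) − Z(s)| ≤ 2^{2α} Σₙ 2^{−n(1/2−α)} Vⁿ · (t−s)^α`
for all `0 ≤ s < t ≤ 1`. -/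
theorem wavelet_holder_bound
    (α : ℝ) (hα1 : 0 < α) (hα2 : α < 1 / 2)
    (W : ℕ → ℕ → ℝ) (V : ℕ → ℝ)
    (hV : ∀ n, IsGreatest {x : ℝ | ∃ k < 2 ^ n, x = |W n k|} (V n))
    (hsum : Summable fun n : ℕ => 2 ^ (-(n : ℝ) * (1 / 2 - α)) * V n) :
    ∃ Z : ℝ → ℝ,
      TendstoUniformlyOn
        (fun (N : ℕ) (t : ℝ) =>
          ∑ n ∈ Finset.range N, ∑ k ∈ Finset.range (2 ^ n), W n k * schauder n k t)
        Z atTop (Set.Icc 0 1) ∧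
      ∀ s t : ℝ, 0 ≤ s → s < t → t ≤ 1 →
        |Z t - Z s| ≤
          2 ^ (2 * α) * (∑' n : ℕ, 2 ^ (-(n : ℝ) * (1 / 2 - α)) * V n) * (t - s) ^ α := by
  have hWle : ∀ n k, k < 2 ^ n → |W n k| ≤ V n := fun n k hk => (hV n).2 ⟨k, hk, rfl⟩
  have hV0 : ∀ n, 0 ≤ V n := by
    intro n
    obtain ⟨k, _, hkeq⟩ := (hV n).1
    rw [hkeq]; positivity
  set M : ℕ → ℝ := fun n => 2 ^ (-(n : ℝ) * (1 / 2 - α)) * V n with hM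
  set g : ℕ → ℝ → ℝ := fun n t => ∑ k ∈ Finset.range (2^n), W n k * schauder n k t with hg
  -- sup bound for levels n ≥ 1
  have hsup : ∀ n, n ≠ 0 → ∀ t ∈ Set.Icc (0:ℝ) 1, |g n t| ≤ V n * 2 ^ (-(n:ℝ)/2 - 1) := by
    intro n hn t ht
    have hcpos : (0:ℝ) < 2 ^ n := by positivity
    set m : ℕ := ⌊2 ^ n * t⌋₊ with hm
    have htn : (0:ℝ) ≤ 2 ^ n * t := mul_nonneg (by positivity) ht.1
    have hsum_eq : g n t = W n m * schauder n m t := by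
      refine Finset.sum_eq_single m (fun k hk hkm => ?_) (fun hmem => ?_)
      · rcases lt_or_gt_of_ne hkm with h | h
        · refine mul_eq_zero_of_right _ (schauder_eq_zero_right n k hn ?_)
          rw [div_le_iff₀ hcpos]
          have h1 : (k:ℝ) + 1 ≤ (m:ℝ) := by exact_mod_cast h
          have h2 : (m:ℝ) ≤ 2 ^ n * t := Nat.floor_le htn
          linarith [mul_comm t ((2:ℝ)^n)]
        · refine mul_eq_zero_of_right _ (schauder_eq_zero_left n k hn ?_)
          rw [le_div_iff₀ hcpos]
          have h1 : 2 ^ n * t < (m:ℝ) + 1 := Nat.lt_floor_add_one _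
          have h2 : (m:ℝ) + 1 ≤ (k:ℝ) := by exact_mod_cast h
          linarith [mul_comm t ((2:ℝ)^n)]
      · refine mul_eq_zero_of_right _ (schauder_eq_zero_left n m hn ?_)
        rw [le_div_iff₀ hcpos]
        have h1 : (2:ℝ) ^ n ≤ (m:ℝ) := by
          exact_mod_cast Nat.le_of_not_lt (fun h => hmem (Finset.mem_range.2 h))
        nlinarith [ht.2, ht.1]
    rw [hsum_eq, ← pow_half_inv n]
    rcases lt_or_ge m (2^n) with hmlt | hmge
    · rw [abs_mul]
      exact mul_le_mul (hWle n m hmlt) (schauder_abs_le n m hn t) (abs_nonneg _)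
        (hV0 n)
    · have : schauder n m t = 0 := by
        refine schauder_eq_zero_left n m hn ?_
        rw [le_div_iff₀ hcpos]
        have h1 : (2:ℝ) ^ n ≤ (m:ℝ) := by exact_mod_cast hmge
        nlinarith [ht.2, ht.1]
      rw [this, mul_zero, abs_zero]
      exact mul_nonneg (hV0 n) (by positivity)
  -- pointwise bound on the derivative series at each level
  have hder : ∀ (n : ℕ) (u : ℝ),
      |∑ k ∈ Finset.range (2^n), W n k * haarFn n k u| ≤ 2 * (V n * 2 ^ ((n:ℝ)/2)) := by
    intro n u
    rcases eq_or_ne n 0 with rfl | hn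
    · rw [pow_zero, Finset.sum_range_one, abs_mul]
      have h1 : |haarFn 0 0 u| ≤ 1 := by
        unfold haarFn; simp only [if_pos rfl]; split_ifs <;> norm_num
      have h2 : (1:ℝ) ≤ 2 ^ ((0:ℕ):ℝ)/2 * 2 := by norm_num
      calc |W 0 0| * |haarFn 0 0 u| ≤ V 0 * 1 :=
            mul_le_mul (hWle 0 0 (by norm_num)) h1 (abs_nonneg _) (hV0 0)
        _ ≤ 2 * (V 0 * 2 ^ (((0:ℕ):ℝ)/2)) := by
            rw [Nat.cast_zero, zero_div, Real.rpow_zero]; nlinarith [hV0 0]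
    · set f : ℕ → ℝ := fun k => |W n k * haarFn n k u| with hf
      have habs : |∑ k ∈ Finset.range (2^n), W n k * haarFn n k u|
          ≤ ∑ k ∈ Finset.range (2^n), f k := Finset.abs_sum_le_sum_abs _ _
      set T : Finset ℕ := (Finset.range (2^n)).filter (fun k => f k ≠ 0) with hT
      have hTsum : ∑ k ∈ Finset.range (2^n), f k = ∑ k ∈ T, f k :=
        (Finset.sum_filter_ne_zero _).symm
      set m : ℕ := ⌊2 ^ n * u⌋₊ with hm
      have hTsub : T ⊆ ({m, m - 1} : Finset ℕ) := by
        intro k hk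
        obtain ⟨hkr, hkne⟩ := Finset.mem_filter.1 hk
        have hW : haar (2 ^ n * u - k) ≠ 0 := by
          intro h0
          apply hkne
          simp [hf, haarFn, hn, h0]
        have hlow : (k:ℝ) ≤ 2 ^ n * u := by
          by_contra hc
          exact hW (haar_neg (by push_neg at hc; linarith))
        have hhigh : 2 ^ n * u ≤ (k:ℝ) + 1 := by
          by_contra hc
          exact hW (haar_gt (by push_neg at hc; linarith))
        have h1 : k ≤ m := Nat.le_floor hlow
        have h2 : m ≤ k + 1 := by
          have hle : 2 ^ n * u ≤ ((k + 1 : ℕ) : ℝ) := by push_cast; linarith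
          have := Nat.floor_mono hle
          rwa [Nat.floor_natCast] at this
        simp only [Finset.mem_insert, Finset.mem_singleton]
        omega
      have hcard : T.card ≤ 2 :=
        le_trans (Finset.card_le_card hTsub)
          (le_trans (Finset.card_insert_le _ _) (by simp))
      have hbound : ∀ k ∈ T, f k ≤ V n * 2 ^ ((n:ℝ)/2) := by
        intro k hk
        obtain ⟨hkr, _⟩ := Finset.mem_filter.1 hk
        simp only [hf, abs_mul]
        exact mul_le_mul (hWle n k (Finset.mem_range.1 hkr)) (haarFn_abs_le n k u)
          (abs_nonneg _) (hV0 n)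
      calc |∑ k ∈ Finset.range (2^n), W n k * haarFn n k u|
          ≤ ∑ k ∈ T, f k := by rw [← hTsum]; exact habs
        _ ≤ T.card • (V n * 2 ^ ((n:ℝ)/2)) := Finset.sum_le_card_nsmul _ _ _ hbound
        _ ≤ 2 * (V n * 2 ^ ((n:ℝ)/2)) := by
            rw [nsmul_eq_mul]
            exact mul_le_mul_of_nonneg_right (by exact_mod_cast hcard)
              (mul_nonneg (hV0 n) (rpow_half_pos n).le)
  -- Lipschitz-type bound at each level
  have hdiff : ∀ (n : ℕ) (s t : ℝ), s ≤ t →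
      |g n t - g n s| ≤ 2 * (V n * 2 ^ ((n:ℝ)/2)) * (t - s) := by
    intro n s t hst
    have h1 : g n t - g n s = ∫ u in s..t, ∑ k ∈ Finset.range (2^n), W n k * haarFn n k u := by
      rw [intervalIntegral.integral_finset_sum
        (fun k _ => (haarFn_intervalIntegrable n k s t).const_mul (W n k))]
      rw [hg, ← Finset.sum_sub_distrib]
      refine Finset.sum_congr rfl fun k _ => ?_
      rw [intervalIntegral.integral_const_mul, ← mul_sub]
      congr 1
      unfold schauder
      rw [intervalIntegral.integral_interval_sub_left (haarFn_intervalIntegrable n k 0 t)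
        (haarFn_intervalIntegrable n k 0 s)]
    rw [h1]
    have := intervalIntegral.norm_integral_le_of_norm_le_const
      (C := 2 * (V n * 2 ^ ((n:ℝ)/2)))
      (f := fun u => ∑ k ∈ Finset.range (2^n), W n k * haarFn n k u) (a := s) (b := t)
      (fun x _ => by simpa [Real.norm_eq_abs] using hder n x)
    rwa [Real.norm_eq_abs, abs_of_nonneg (by linarith : (0:ℝ) ≤ t - s)] at this
  -- uniform (Weierstrass) bound
  have hexp : ∀ n : ℕ, (2:ℝ) ^ (-(n:ℝ)/2 - 1) ≤ 2 ^ (-(n:ℝ) * (1/2 - α)) := by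
    intro n
    refine Real.rpow_le_rpow_of_exponent_le one_le_two ?_
    have : (0:ℝ) ≤ (n:ℝ) := Nat.cast_nonneg n
    nlinarith
  have hMb : ∀ n : ℕ, ∀ t ∈ Set.Icc (0:ℝ) 1, ‖g n t‖ ≤ M n := by
    intro n t ht
    rcases eq_or_ne n 0 with rfl | hn
    · have e : g 0 t = W 0 0 * t := by
        rw [hg]
        simp only [pow_zero, Finset.sum_range_one]
        rw [schauder_zero_eq ht.1 ht.2]
      rw [Real.norm_eq_abs, e, abs_mul, hM]
      simp only [Nat.cast_zero, neg_zero, zero_mul, Real.rpow_zero, one_mul]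
      calc |W 0 0| * |t| ≤ V 0 * 1 := by
            refine mul_le_mul (hWle 0 0 (by norm_num)) ?_ (abs_nonneg _) (hV0 0)
            rw [abs_of_nonneg ht.1]; exact ht.2
        _ = V 0 := mul_one _
    · calc ‖g n t‖ = |g n t| := Real.norm_eq_abs _
        _ ≤ V n * 2 ^ (-(n:ℝ)/2 - 1) := hsup n hn t ht
        _ ≤ 2 ^ (-(n:ℝ) * (1/2 - α)) * V n := by
            rw [mul_comm]
            exact mul_le_mul_of_nonneg_right (hexp n) (hV0 n)
  have h2a : (2:ℝ) ^ α ≤ 2 ^ (2 * α) :=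
    Real.rpow_le_rpow_of_exponent_le one_le_two (by linarith)
  have h2a1 : (1:ℝ) ≤ 2 ^ (2 * α) := by
    calc (1:ℝ) = 2 ^ (0:ℝ) := (Real.rpow_zero 2).symm
      _ ≤ 2 ^ (2 * α) := Real.rpow_le_rpow_of_exponent_le one_le_two (by linarith)
  refine ⟨fun t => ∑' n, g n t, ?_, ?_⟩
  · exact tendstoUniformlyOn_tsum_nat hsum hMb
  · intro s t hs hst ht
    have hδ0 : (0:ℝ) < t - s := by linarith
    have hδ1 : t - s ≤ 1 := by linarith
    have hsmem : s ∈ Set.Icc (0:ℝ) 1 := ⟨hs, by linarith⟩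
    have htmem : t ∈ Set.Icc (0:ℝ) 1 := ⟨by linarith, ht⟩
    have hgt : Summable fun n => g n t :=
      Summable.of_norm_bounded hsum (fun n => hMb n t htmem)
    have hgs : Summable fun n => g n s :=
      Summable.of_norm_bounded hsum (fun n => hMb n s hsmem)
    have hδα : (0:ℝ) ≤ (t - s) ^ α := Real.rpow_nonneg hδ0.le _
    -- per-level Hölder bound
    have hlevel : ∀ n : ℕ, ‖g n t - g n s‖ ≤ (2 ^ (2*α) * (t - s) ^ α) * M n := by
      intro n
      rw [Real.norm_eq_abs]
      rcases eq_or_ne n 0 with rfl | hn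
      · have e : g 0 t - g 0 s = W 0 0 * (t - s) := by
          rw [hg]
          simp only [pow_zero, Finset.sum_range_one]
          rw [schauder_zero_eq htmem.1 htmem.2, schauder_zero_eq hsmem.1 hsmem.2]
          ring
        have hM0 : M 0 = V 0 := by
          rw [hM]; simp [Real.rpow_zero]
        rw [e, abs_mul, hM0, abs_of_pos hδ0]
        have h1 : (t - s) ≤ (t - s) ^ α := by
          calc t - s = (t - s) ^ (1:ℝ) := (Real.rpow_one _).symm
            _ ≤ (t - s) ^ α := Real.rpow_le_rpow_of_exponent_ge hδ0 hδ1 (by linarith)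
        calc |W 0 0| * (t - s) ≤ V 0 * (t - s) ^ α := by
              refine mul_le_mul (hWle 0 0 (by norm_num)) h1 hδ0.le (hV0 0)
          _ ≤ 2 ^ (2*α) * (t - s) ^ α * V 0 := by nlinarith [hV0 0, hδα, h2a1, mul_nonneg hδα (hV0 0)]
      · set R : ℝ := 2 ^ ((n:ℝ)/2) with hRd
        set R' : ℝ := 2 ^ (-(n:ℝ)/2) with hR'd
        have hR0 : (0:ℝ) < R := Real.rpow_pos_of_pos two_pos _
        have hR'0 : (0:ℝ) < R' := Real.rpow_pos_of_pos two_pos _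
        set D : ℝ := |g n t - g n s| with hD
        set A : ℝ := 2 * (V n * R) * (t - s) with hA
        set Bv : ℝ := R' * V n with hBv
        have hDA : D ≤ A := hdiff n s t hst.le
        have hDB : D ≤ Bv := by
          have h2 : (2:ℝ) * (2 ^ (-(n:ℝ)/2 - 1)) = R' := by
            rw [hR'd, show (2:ℝ) * (2 ^ (-(n:ℝ)/2 - 1)) = 2 ^ (1:ℝ) * 2 ^ (-(n:ℝ)/2 - 1) by
              rw [Real.rpow_one], ← Real.rpow_add two_pos]
            norm_num
          calc D ≤ |g n t| + |g n s| := by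
                rw [hD]; exact abs_sub _ _
            _ ≤ V n * 2 ^ (-(n:ℝ)/2 - 1) + V n * 2 ^ (-(n:ℝ)/2 - 1) :=
                add_le_add (hsup n hn t htmem) (hsup n hn s hsmem)
            _ = Bv := by rw [hBv, ← h2]; ring
        have hD0 : 0 ≤ D := abs_nonneg _
        have hA0 : 0 ≤ A := by
          rw [hA]; exact mul_nonneg (mul_nonneg two_pos.le (mul_nonneg (hV0 n) hR0.le)) hδ0.le
        have hBv0 : 0 ≤ Bv := mul_nonneg hR'0.le (hV0 n)
        have key : D ≤ A ^ α * Bv ^ (1 - α) := by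
          calc D = D ^ (1:ℝ) := (Real.rpow_one D).symm
            _ = D ^ α * D ^ (1 - α) := by
                rw [← Real.rpow_add' hD0 (by norm_num : α + (1 - α) ≠ 0)]
                norm_num
            _ ≤ A ^ α * Bv ^ (1 - α) :=
                mul_le_mul (Real.rpow_le_rpow hD0 hDA hα1.le)
                  (Real.rpow_le_rpow hD0 hDB (by linarith))
                  (Real.rpow_nonneg hD0 _) (Real.rpow_nonneg hA0 _)
        have e1 : R ^ α * R' ^ (1 - α) = 2 ^ (-(n:ℝ) * (1/2 - α)) := by
          rw [hRd, hR'd, ← Real.rpow_mul (by norm_num : (0:ℝ) ≤ 2),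
            ← Real.rpow_mul (by norm_num : (0:ℝ) ≤ 2), ← Real.rpow_add two_pos]
          congr 1
          ring
        have e2 : V n ^ α * V n ^ (1 - α) = V n := by
          rw [← Real.rpow_add' (hV0 n) (by norm_num : α + (1 - α) ≠ 0),
            show α + (1 - α) = (1:ℝ) by ring, Real.rpow_one]
        have expand : A ^ α * Bv ^ (1 - α)
            = 2 ^ α * ((t-s) ^ α * ((V n ^ α * V n ^ (1-α)) * (R ^ α * R' ^ (1-α)))) := by
          rw [hA, hBv,
            Real.mul_rpow (mul_nonneg two_pos.le (mul_nonneg (hV0 n) hR0.le)) hδ0.le,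
            Real.mul_rpow two_pos.le (mul_nonneg (hV0 n) hR0.le),
            Real.mul_rpow (hV0 n) hR0.le,
            Real.mul_rpow hR'0.le (hV0 n)]
          ring
        calc |g n t - g n s| = D := rfl
          _ ≤ A ^ α * Bv ^ (1 - α) := key
          _ = 2 ^ α * ((t-s) ^ α * (V n * 2 ^ (-(n:ℝ) * (1/2 - α)))) := by
              rw [expand, e1, e2]
          _ ≤ 2 ^ (2*α) * (t - s) ^ α * M n := by
              rw [hM]
              have hrest : (0:ℝ) ≤ (t-s) ^ α * (V n * 2 ^ (-(n:ℝ) * (1/2 - α))) :=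
                mul_nonneg hδα (mul_nonneg (hV0 n) (Real.rpow_pos_of_pos two_pos _).le)
              calc 2 ^ α * ((t-s) ^ α * (V n * 2 ^ (-(n:ℝ) * (1/2 - α))))
                  ≤ 2 ^ (2*α) * ((t-s) ^ α * (V n * 2 ^ (-(n:ℝ) * (1/2 - α)))) :=
                    mul_le_mul_of_nonneg_right h2a hrest
                _ = 2 ^ (2*α) * (t - s) ^ α * (2 ^ (-(n:ℝ) * (1/2 - α)) * V n) := by ring
          _ = (2 ^ (2*α) * (t - s) ^ α) * M n := by ring
    have hnorm : Summable fun n => ‖g n t - g n s‖ :=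
      Summable.of_nonneg_of_le (fun n => norm_nonneg _) hlevel
        (hsum.mul_left (2 ^ (2*α) * (t - s) ^ α))
    calc |(∑' n, g n t) - ∑' n, g n s| = |∑' n, (g n t - g n s)| := by
          rw [hgt.tsum_sub hgs]
      _ ≤ ∑' n, ‖g n t - g n s‖ := by
          simpa [Real.norm_eq_abs] using norm_tsum_le_tsum_norm hnorm
      _ ≤ ∑' n, (2 ^ (2*α) * (t - s) ^ α) * M n :=
          Summable.tsum_le_tsum hlevel hnorm (hsum.mul_left _)
      _ = (2 ^ (2*α) * (t - s) ^ α) * ∑' n, M n := tsum_mul_left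
      _ = 2 ^ (2*α) * (∑' n, M n) * (t - s) ^ α := by ring
end

section
/- Let (W_k^n)_{n≥1, 0≤k<2^n} be a family of independent standard normal random variables. Define N₁ = sup{ n ≥ 1 : |W_k^n| > 4√(n+1) for some 0 ≤ k < 2^n }, with the convention sup ∅ = 0. Then N₁ is almost surely finite and E[N₁] < ∞. -/
open MeasureTheory ProbabilityTheory Filter
open scoped ENNReal

lemma gaussian_tail_aux {a : ℝ} (ha : 0 ≤ a) :
    gaussianReal 0 1 {x | a < |x|} ≤ ENNReal.ofReal (2 * Real.exp (-(a ^ 2 / 4))) := by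
  have hπ := Real.pi_pos
  have hs : MeasurableSet {x : ℝ | a < |x|} :=
    (isOpen_lt continuous_const continuous_abs).measurableSet
  have key : ∀ x : ℝ, a < |x| →
      gaussianPDFReal 0 1 x ≤ Real.sqrt 2 * Real.exp (-(a ^ 2 / 4)) * gaussianPDFReal 0 2 x := by
    intro x hx
    have ha2 : a ^ 2 ≤ x ^ 2 := by
      have h1 : a ^ 2 ≤ |x| ^ 2 := pow_le_pow_left₀ ha hx.le 2
      simpa [sq_abs] using h1
    simp only [gaussianPDFReal, sub_zero]
    push_cast
    have h2 : Real.sqrt (2 * Real.pi * 2) = Real.sqrt 2 * Real.sqrt (2 * Real.pi * 1) := by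
      rw [mul_one, ← Real.sqrt_mul (by norm_num : (0:ℝ) ≤ 2)]
      ring_nf
    rw [h2, mul_inv]
    have hsqrt2 : (0:ℝ) < Real.sqrt 2 := by positivity
    have hexp : Real.exp (-x ^ 2 / (2 * 1)) ≤
        Real.exp (-(a ^ 2 / 4)) * Real.exp (-x ^ 2 / (2 * 2)) := by
      rw [← Real.exp_add]
      apply Real.exp_le_exp.mpr
      nlinarith
    calc (Real.sqrt (2 * Real.pi * 1))⁻¹ * Real.exp (-x ^ 2 / (2 * 1))
        ≤ (Real.sqrt (2 * Real.pi * 1))⁻¹ *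
          (Real.exp (-(a ^ 2 / 4)) * Real.exp (-x ^ 2 / (2 * 2))) := by
          apply mul_le_mul_of_nonneg_left hexp (by positivity)
      _ = Real.sqrt 2 * Real.exp (-(a ^ 2 / 4)) *
          ((Real.sqrt 2)⁻¹ * (Real.sqrt (2 * Real.pi * 1))⁻¹ * Real.exp (-x ^ 2 / (2 * 2))) := by
          field_simp
  rw [gaussianReal_apply 0 one_ne_zero]
  calc ∫⁻ x in {x | a < |x|}, gaussianPDF 0 1 x
      ≤ ∫⁻ x in {x | a < |x|},
          ENNReal.ofReal (Real.sqrt 2 * Real.exp (-(a ^ 2 / 4))) * gaussianPDF 0 2 x := by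
        apply setLIntegral_mono (measurable_const.mul (measurable_gaussianPDF 0 2)) (fun x hx => ?_)
        simp only [Pi.mul_apply]
        rw [gaussianPDF, gaussianPDF, ← ENNReal.ofReal_mul (by positivity)]
        exact ENNReal.ofReal_le_ofReal (key x hx)
    _ ≤ ∫⁻ x, ENNReal.ofReal (Real.sqrt 2 * Real.exp (-(a ^ 2 / 4))) * gaussianPDF 0 2 x :=
        lintegral_mono' Measure.restrict_le_self le_rfl
    _ = ENNReal.ofReal (Real.sqrt 2 * Real.exp (-(a ^ 2 / 4))) * ∫⁻ x, gaussianPDF 0 2 x :=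
        lintegral_const_mul' _ _ ENNReal.ofReal_ne_top
    _ = ENNReal.ofReal (Real.sqrt 2 * Real.exp (-(a ^ 2 / 4))) := by
        rw [lintegral_gaussianPDF_eq_one 0 two_ne_zero, mul_one]
    _ ≤ ENNReal.ofReal (2 * Real.exp (-(a ^ 2 / 4))) := by
        apply ENNReal.ofReal_le_ofReal
        have h42 : Real.sqrt 4 = 2 := by
          rw [show (4:ℝ) = 2 ^ 2 by norm_num]
          exact Real.sqrt_sq (by norm_num)
        have : Real.sqrt 2 ≤ 2 :=
          le_of_le_of_eq (Real.sqrt_le_sqrt (by norm_num)) h42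
        have := Real.exp_pos (-(a ^ 2 / 4))
        nlinarith

/-- The last level at which a wavelet coefficient record is broken:
`N₁ = sup { n ≥ 1 : |Wₖⁿ| > 4√(n+1) for some 0 ≤ k < 2ⁿ }` (an `ℝ≥0∞`-valued supremum,
equal to `0` if no record is ever broken). -/
noncomputable def recordLevel (W : ℕ → ℕ → ℝ) : ℝ≥0∞ :=
  ⨆ (n : ℕ) (_ : 1 ≤ n ∧ ∃ k < 2 ^ n, 4 * Real.sqrt ((n : ℝ) + 1) < |W n k|), (n : ℝ≥0∞)

/-- **Lemma (a.s. finitely many record breakers; `E[N₁] < ∞`).**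
If `(Wₖⁿ)_{n ≥ 1, 0 ≤ k < 2ⁿ}` are independent standard normal random variables, then
`N₁ = sup{ n ≥ 1 : |Wₖⁿ| > 4√(n+1) for some k < 2ⁿ }` is almost surely finite and has finite
expectation. -/
theorem record_level_integrable
    {Ω : Type*} [MeasurableSpace Ω] (P : Measure Ω) [IsProbabilityMeasure P]
    (W : ℕ → ℕ → Ω → ℝ)
    (hIndep : iIndepFun
      (fun p : {q : ℕ × ℕ // 1 ≤ q.1 ∧ q.2 < 2 ^ q.1} => W p.1.1 p.1.2) P)
    (hGauss : ∀ n k : ℕ, 1 ≤ n → k < 2 ^ n → P.map (W n k) = gaussianReal 0 1) :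
    (∀ᵐ ω ∂P, recordLevel (fun n k => W n k ω) < ⊤) ∧
    ∫⁻ ω, recordLevel (fun n k => W n k ω) ∂P < ⊤ := by
  classical
  -- measurability of the W's
  have hW : ∀ n k, 1 ≤ n → k < 2 ^ n → AEMeasurable (W n k) P := by
    intro n k hn hk
    by_contra h
    have h0 : (0 : Measure ℝ) = gaussianReal 0 1 := by
      rw [← hGauss n k hn hk, Measure.map_of_not_aemeasurable h]
    exact (IsProbabilityMeasure.ne_zero (gaussianReal 0 1)) h0.symm
  have hsmeas : ∀ r : ℝ, MeasurableSet {x : ℝ | r < |x|} := fun r =>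
    (isOpen_lt continuous_const continuous_abs).measurableSet
  -- the tail bound for each (n, k)
  have hSk : ∀ (n k : ℕ), 1 ≤ n → k < 2 ^ n →
      P {ω | 4 * Real.sqrt ((n : ℝ) + 1) < |W n k ω|} ≤
        ENNReal.ofReal (2 * Real.exp (-(4 * ((n : ℝ) + 1)))) := by
    intro n k hn hk
    have heq : {ω | 4 * Real.sqrt ((n : ℝ) + 1) < |W n k ω|} =
        W n k ⁻¹' {x | 4 * Real.sqrt ((n : ℝ) + 1) < |x|} := rfl
    rw [heq, ← Measure.map_apply_of_aemeasurable (hW n k hn hk) (hsmeas _), hGauss n k hn hk]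
    have hnn : (0:ℝ) ≤ 4 * Real.sqrt ((n : ℝ) + 1) := by positivity
    have h := gaussian_tail_aux hnn
    have hsq : (4 * Real.sqrt ((n : ℝ) + 1)) ^ 2 / 4 = 4 * ((n : ℝ) + 1) := by
      rw [mul_pow, Real.sq_sqrt (by positivity)]
      ring
    rwa [hsq] at h
  -- the events and the dominating function
  set A : ℕ → Set Ω := fun n =>
    {ω | 1 ≤ n ∧ ∃ k < 2 ^ n, 4 * Real.sqrt ((n : ℝ) + 1) < |W n k ω|} with hA
  set f : ℕ → Ω → ℝ≥0∞ := fun n => (A n).indicator (fun _ => (n : ℝ≥0∞)) with hf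
  have hAunion : ∀ n, 1 ≤ n → A n =
      ⋃ k ∈ Finset.range (2 ^ n), W n k ⁻¹' {x | 4 * Real.sqrt ((n : ℝ) + 1) < |x|} := by
    intro n hn
    ext ω
    simp only [hA, Set.mem_setOf_eq, Set.mem_iUnion, Finset.mem_range, Set.mem_preimage,
      exists_prop]
    tauto
  have hAmeas : ∀ n, NullMeasurableSet (A n) P := by
    intro n
    rcases Nat.eq_zero_or_pos n with h | h
    · subst h
      have : A 0 = ∅ := by ext ω; simp [hA]
      rw [this]; exact MeasurableSet.empty.nullMeasurableSet
    · rw [hAunion n h]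
      exact NullMeasurableSet.biUnion (Finset.range (2 ^ n)).countable_toSet
        (fun k hk => (hW n k h (Finset.mem_range.mp (Finset.mem_coe.mp hk))).nullMeasurable (hsmeas _))
  have hfm : ∀ n, AEMeasurable (f n) P := fun n =>
    aemeasurable_const.indicator₀ (hAmeas n)
  -- the real-valued bounding sequence
  set b : ℕ → ℝ := fun n =>
    (n : ℝ) * ((2 : ℝ) ^ n * (2 * Real.exp (-(4 * ((n : ℝ) + 1))))) with hb
  have hbnn : ∀ n, 0 ≤ b n := fun n => by positivity
  -- bound on P (A n)
  have hPA : ∀ n, P (A n) ≤ ENNReal.ofReal ((2 : ℝ) ^ n * (2 * Real.exp (-(4 * ((n : ℝ) + 1))))) := by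
    intro n
    rcases Nat.eq_zero_or_pos n with h | h
    · subst h
      have : A 0 = ∅ := by ext ω; simp [hA]
      simp [this]
    · calc P (A n) ≤ ∑ k ∈ Finset.range (2 ^ n),
            P (W n k ⁻¹' {x | 4 * Real.sqrt ((n : ℝ) + 1) < |x|}) := by
            rw [hAunion n h]
            exact measure_biUnion_finset_le _ _
        _ ≤ ∑ _k ∈ Finset.range (2 ^ n),
            ENNReal.ofReal (2 * Real.exp (-(4 * ((n : ℝ) + 1)))) :=
            Finset.sum_le_sum fun k hk => hSk n k h (by simpa using hk)
        _ = (2 ^ n : ℕ) * ENNReal.ofReal (2 * Real.exp (-(4 * ((n : ℝ) + 1)))) := by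
            rw [Finset.sum_const, Finset.card_range, nsmul_eq_mul]
        _ = ENNReal.ofReal ((2 : ℝ) ^ n * (2 * Real.exp (-(4 * ((n : ℝ) + 1))))) := by
            rw [← ENNReal.ofReal_natCast (2 ^ n), ← ENNReal.ofReal_mul (by positivity)]
            congr 1
            push_cast
            ring
  -- integral of each f n
  have hfint : ∀ n, ∫⁻ ω, f n ω ∂P ≤ ENNReal.ofReal (b n) := by
    intro n
    rw [hf, lintegral_indicator_const₀ (hAmeas n)]
    calc (n : ℝ≥0∞) * P (A n)
        ≤ (n : ℝ≥0∞) * ENNReal.ofReal ((2 : ℝ) ^ n * (2 * Real.exp (-(4 * ((n : ℝ) + 1))))) :=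
          mul_le_mul_right (hPA n) _
      _ = ENNReal.ofReal (b n) := by
          rw [← ENNReal.ofReal_natCast n, ← ENNReal.ofReal_mul (Nat.cast_nonneg n)]
  -- summability of b
  have hr : |2 * Real.exp (-4)| < 1 := by
    have hmul : Real.exp (-4) * Real.exp 4 = 1 := by
      rw [← Real.exp_add]; norm_num
    have h4 : (2 : ℝ) < Real.exp 4 := by
      have := Real.add_one_le_exp (4 : ℝ)
      linarith
    rw [abs_of_pos (by positivity)]
    nlinarith [Real.exp_pos (-4)]
  have hgeom : Summable (fun n : ℕ => (n : ℝ) * (2 * Real.exp (-4)) ^ n) := by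
    have := summable_pow_mul_geometric_of_norm_lt_one (R := ℝ) 1
      (r := 2 * Real.exp (-4)) (by rwa [Real.norm_eq_abs])
    simpa using this
  have hbsum : Summable b := by
    have h2 : Summable (fun n : ℕ => (2 * Real.exp (-4)) * ((n : ℝ) * (2 * Real.exp (-4)) ^ n)) :=
      hgeom.mul_left _
    apply h2.congr
    intro n
    rw [hb]
    simp only []
    have hexp : Real.exp (-(4 * ((n : ℝ) + 1))) = Real.exp (-4) ^ (n + 1) := by
      rw [← Real.exp_nat_mul]
      congr 1
      push_cast
      ring
    rw [hexp, pow_succ, mul_pow]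
    ring
  -- the total bound
  have htsum : ∑' n, ENNReal.ofReal (b n) ≠ ⊤ := by
    rw [← ENNReal.ofReal_tsum_of_nonneg hbnn hbsum]
    exact ENNReal.ofReal_ne_top
  have hg_int : ∫⁻ ω, ∑' n, f n ω ∂P < ⊤ := by
    rw [lintegral_tsum hfm]
    exact lt_of_le_of_lt (ENNReal.tsum_le_tsum hfint) htsum.lt_top
  -- pointwise bound on recordLevel
  have hrec_le : ∀ ω, recordLevel (fun n k => W n k ω) ≤ ∑' n, f n ω := by
    intro ω
    rw [recordLevel]
    apply iSup_le
    intro n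
    apply iSup_le
    intro hcond
    have hmem : ω ∈ A n := hcond
    calc (n : ℝ≥0∞) = f n ω := by rw [hf]; simp [Set.indicator_of_mem hmem]
      _ ≤ ∑' m, f m ω := ENNReal.le_tsum n
  constructor
  · have hgm : AEMeasurable (fun ω => ∑' n, f n ω) P :=
      AEMeasurable.ennreal_tsum hfm
    filter_upwards [ae_lt_top' hgm hg_int.ne] with ω hω
    exact lt_of_le_of_lt (hrec_le ω) hω
  · exact lt_of_le_of_lt (lintegral_mono hrec_le) hg_int
end

section
/- Fix α ∈ (1/3, 1/2) and β ∈ (1−α, 2α) and set Δ_n = 2^{-n}. On a probability space, for each n ≥ 1 let {X_r^n, Y_r^n : 1 ≤ r ≤ 2^{n−1}} be 2^n random variables that (for each fixed n) are mutually independent, each with the centered Gaussian law N(0, Δ_n); define L^n(0) = 0 and L^n(k) = Σ_{r=1}^k X_r^n Y_r^n for 1 ≤ k ≤ 2^{n−1}. Then almost surely only finitely many of the events C_n = { |L^n(m) − L^n(l)| > (m−l)^β Δ_n^{2α} for some 0 ≤ l < m ≤ 2^{n−1} } occur; equivalently, there exists an almost surely finite random N₂ such that for all n ≥ N₂ and all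 0 ≤ l < m ≤ 2^{n−1}, |L^n(m) − L^n(l)| ≤ (m−l)^β Δ_n^{2α}. -/
open MeasureTheory ProbabilityTheory Filter Finset
open scoped NNReal

open Real

noncomputable def gM (j : ℕ) : ℝ := ∫ x, x ^ j ∂(gaussianReal 0 1)

lemma integrable_pow_mul_exp_neg_mul_sq' {b : ℝ} (hb : 0 < b) (j : ℕ) :
    Integrable (fun x : ℝ => x ^ j * Real.exp (-b * x ^ 2)) := by
  have hs : (-1 : ℝ) < j := by
    have := Nat.cast_nonneg (α := ℝ) j; linarith
  have hIoi : IntegrableOn (fun x : ℝ => |x| ^ (j : ℝ) * Real.exp (-b * x ^ 2)) (Set.Ioi 0) := by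
    refine (integrableOn_rpow_mul_exp_neg_mul_sq hb hs).congr_fun (fun x hx => ?_)
      measurableSet_Ioi
    rw [abs_of_pos hx]
  have habs : Integrable (fun x : ℝ => |x| ^ (j : ℝ) * Real.exp (-b * x ^ 2)) := by
    rw [← integrableOn_univ, ← Set.Iio_union_Ici (a := (0:ℝ)), integrableOn_union,
      integrableOn_Ici_iff_integrableOn_Ioi]
    refine ⟨?_, hIoi⟩
    rw [← (Measure.measurePreserving_neg (volume : Measure ℝ)).integrableOn_comp_preimage
        (Homeomorph.neg ℝ).measurableEmbedding]
    simp only [Function.comp_def, neg_sq, Set.neg_preimage, Set.neg_Iio, neg_neg, neg_zero,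
      abs_neg]
    exact hIoi
  refine habs.mono' ?_ (ae_of_all _ fun x => ?_)
  · exact ((measurable_id.pow_const j).mul
      (((measurable_id.pow_const 2).const_mul (-b)).exp)).aestronglyMeasurable
  · rw [norm_mul, norm_pow, Real.norm_eq_abs, Real.norm_eq_abs, abs_of_pos (Real.exp_pos _),
      ← Real.rpow_natCast |x| j]

lemma integrable_pow_gaussianReal {v : ℝ≥0} (hv : v ≠ 0) (j : ℕ) :
    Integrable (fun x : ℝ => x ^ j) (gaussianReal 0 v) := by
  have hv' : (0:ℝ) < v := by positivity
  rw [gaussianReal_of_var_ne_zero 0 hv, integrable_withDensity_iff (measurable_gaussianPDF 0 v)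
    (ae_of_all _ fun x => ENNReal.ofReal_lt_top)]
  have hb : (0:ℝ) < (2 * (v:ℝ))⁻¹ := by positivity
  have h := (integrable_pow_mul_exp_neg_mul_sq' hb j).mul_const ((Real.sqrt (2 * π * v))⁻¹)
  refine h.congr (ae_of_all _ fun x => ?_)
  have h1 : (gaussianPDF 0 v x).toReal = gaussianPDFReal 0 v x := by
    rw [gaussianPDF_def, ENNReal.toReal_ofReal (gaussianPDFReal_nonneg 0 v x)]
  simp only
  rw [h1, gaussianPDFReal_def]
  have hexp : -(2 * (v:ℝ))⁻¹ * x ^ 2 = -(x - 0) ^ 2 / (2 * (v:ℝ)) := by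
    field_simp
    ring
  rw [hexp]
  ring
lemma gaussianReal_map_sqrt_mul {v : ℝ≥0} :
    (gaussianReal 0 1).map (fun x => Real.sqrt v * x) = gaussianReal 0 v := by
  rw [show (fun x => Real.sqrt v * x) = (Real.sqrt (v:ℝ) * ·) from rfl,
    gaussianReal_map_const_mul]
  rw [mul_zero]
  congr 1
  ext
  push_cast
  rw [Real.sq_sqrt v.coe_nonneg, mul_one]

lemma integral_pow_gaussianReal (v : ℝ≥0) (j : ℕ) :
    ∫ x, x ^ j ∂(gaussianReal 0 v) = Real.sqrt v ^ j * gM j := by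
  rw [← gaussianReal_map_sqrt_mul (v := v),
    integral_map (by fun_prop) (by exact (measurable_id.pow_const j).aestronglyMeasurable)]
  simp_rw [mul_pow]
  rw [integral_const_mul]
  rfl

lemma gM_zero : gM 0 = 1 := by
  simp [gM]

lemma gM_odd {j : ℕ} (hj : Odd j) : gM j = 0 := by
  have h1 : (gaussianReal 0 1).map (fun x : ℝ => (-1 : ℝ) * x) = gaussianReal 0 1 := by
    rw [show (fun x : ℝ => (-1:ℝ) * x) = ((-1:ℝ) * ·) from rfl, gaussianReal_map_const_mul]
    norm_num
  have h2 : gM j = -gM j := by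
    conv_lhs => rw [gM, ← h1]
    rw [integral_map (by fun_prop) (by exact (measurable_id.pow_const j).aestronglyMeasurable)]
    simp_rw [neg_one_mul, hj.neg_pow]
    rw [integral_neg]
    rfl
  linarith
lemma choose_le_two_pow' (n k : ℕ) : n.choose k ≤ 2 ^ n := by
  rcases le_or_gt k n with h | h
  · calc n.choose k ≤ ∑ i ∈ Finset.range (n+1), n.choose i :=
        Finset.single_le_sum (fun _ _ => Nat.zero_le _) (Finset.mem_range.2 (by omega))
      _ = 2 ^ n := Nat.sum_range_choose n
  · rw [Nat.choose_eq_zero_of_lt h]; exact Nat.zero_le _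

noncomputable def KC (p : ℕ) : ℝ :=
  2 + 2 * p * 4 ^ p * (∑ j ∈ Finset.range (p + 1), gM (2 * j) ^ 2)

lemma Mx_nonneg (p : ℕ) : 0 ≤ ∑ j ∈ Finset.range (p + 1), gM (2 * j) ^ 2 :=
  Finset.sum_nonneg fun _ _ => sq_nonneg _

lemma two_le_KC (p : ℕ) : 2 ≤ KC p := by
  have h1 : (0:ℝ) ≤ 2 * p * 4 ^ p * (∑ j ∈ Finset.range (p + 1), gM (2 * j) ^ 2) := by
    have := Mx_nonneg p; positivity
  unfold KC; linarith

lemma one_le_KC (p : ℕ) : 1 ≤ KC p := by linarith [two_le_KC p]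
lemma KC_pos (p : ℕ) : 0 < KC p := by linarith [two_le_KC p]

section Abstract

variable {Ω : Type*} {ι : Type*} [MeasurableSpace Ω] {μ : Measure Ω} [IsProbabilityMeasure μ]

lemma integrable_pow_sum_of_indep (Z : ι → Ω → ℝ) :
    ∀ (I : Finset ι), (∀ i ∈ I, ∀ m : ℕ, Integrable (fun ω => Z i ω ^ m) μ) →
    (∀ J ⊆ I, ∀ a ∈ I, a ∉ J → IndepFun (fun ω => ∑ i ∈ J, Z i ω) (Z a) μ) →
    ∀ m : ℕ, Integrable (fun ω => (∑ i ∈ I, Z i ω) ^ m) μ := by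
  classical
  intro I
  induction I using Finset.induction_on with
  | empty =>
      intro _ _ m
      simpa using (integrable_const ((0:ℝ) ^ m) : Integrable _ μ)
  | @insert a s ha ih =>
      intro hint hindep m
      have hintI : ∀ i ∈ s, ∀ m : ℕ, Integrable (fun ω => Z i ω ^ m) μ :=
        fun i hi => hint i (Finset.mem_insert_of_mem hi)
      have hindepI : ∀ J ⊆ s, ∀ b ∈ s, b ∉ J →
          IndepFun (fun ω => ∑ i ∈ J, Z i ω) (Z b) μ :=
        fun J hJ b hb hbJ =>
          hindep J (hJ.trans (Finset.subset_insert a s)) b (Finset.mem_insert_of_mem hb) hbJ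
      have hS := ih hintI hindepI
      have hInd : IndepFun (fun ω => ∑ i ∈ s, Z i ω) (Z a) μ :=
        hindep s (Finset.subset_insert a s) a (Finset.mem_insert_self a s) ha
      have key : (fun ω => (∑ i ∈ insert a s, Z i ω) ^ m)
          = fun ω => ∑ k ∈ Finset.range (m+1),
              Z a ω ^ k * (∑ i ∈ s, Z i ω) ^ (m - k) * ((m.choose k : ℕ) : ℝ) := by
        funext ω
        rw [Finset.sum_insert ha, add_pow]
      rw [key]
      refine integrable_finset_sum _ fun k _ => ?_
      have hIndPow : IndepFun (fun ω => Z a ω ^ k) (fun ω => (∑ i ∈ s, Z i ω) ^ (m - k)) μ :=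
        hInd.symm.comp (measurable_id.pow_const k) (measurable_id.pow_const (m - k))
      have h1 : Integrable (fun ω => Z a ω ^ k * (∑ i ∈ s, Z i ω) ^ (m - k)) μ :=
        hIndPow.integrable_mul (hint a (Finset.mem_insert_self a s) k) (hS (m - k))
      exact h1.mul_const _
lemma moment_pow_sum (p : ℕ) (δ : ℝ) (hδ : 0 ≤ δ) (Z : ι → Ω → ℝ) :
    ∀ (I : Finset ι),
    (∀ i ∈ I, ∀ m : ℕ, Integrable (fun ω => Z i ω ^ m) μ) →
    (∀ J ⊆ I, ∀ a ∈ I, a ∉ J → IndepFun (fun ω => ∑ i ∈ J, Z i ω) (Z a) μ) →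
    (∀ i ∈ I, ∀ m : ℕ, ∫ ω, Z i ω ^ m ∂μ = δ ^ m * gM m ^ 2) →
    ∀ q, q ≤ p →
      ∫ ω, (∑ i ∈ I, Z i ω) ^ (2 * q) ∂μ ≤ KC p ^ q * (I.card : ℝ) ^ q * δ ^ (2 * q) := by
  classical
  intro I
  induction I using Finset.induction_on with
  | empty =>
      intro _ _ _ q _
      rcases Nat.eq_zero_or_pos q with rfl | hq0
      · simp
      · rw [show ((∅ : Finset ι).card : ℝ) = 0 by simp, zero_pow hq0.ne', mul_zero, zero_mul]
        simp only [Finset.sum_empty]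
        rw [zero_pow (by omega : 2 * q ≠ 0)]
        simp
  | @insert a s ha ih =>
      intro hint hindep hmom q hqp
      have hintI : ∀ i ∈ s, ∀ m : ℕ, Integrable (fun ω => Z i ω ^ m) μ :=
        fun i hi => hint i (Finset.mem_insert_of_mem hi)
      have hindepI : ∀ J ⊆ s, ∀ b ∈ s, b ∉ J →
          IndepFun (fun ω => ∑ i ∈ J, Z i ω) (Z b) μ :=
        fun J hJ b hb hbJ =>
          hindep J (hJ.trans (Finset.subset_insert a s)) b (Finset.mem_insert_of_mem hb) hbJ
      have hmomI : ∀ i ∈ s, ∀ m : ℕ, ∫ ω, Z i ω ^ m ∂μ = δ ^ m * gM m ^ 2 :=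
        fun i hi => hmom i (Finset.mem_insert_of_mem hi)
      have IH : ∀ r, r ≤ p →
          ∫ ω, (∑ i ∈ s, Z i ω) ^ (2 * r) ∂μ ≤ KC p ^ r * (s.card : ℝ) ^ r * δ ^ (2 * r) :=
        ih hintI hindepI hmomI
      rcases Nat.eq_zero_or_pos q with rfl | hq0
      · simp
      set S : Ω → ℝ := fun ω => ∑ i ∈ s, Z i ω with hSdef
      set c : ℝ := (s.card : ℝ) with hcdef
      have hc0 : 0 ≤ c := Nat.cast_nonneg _
      have hInd : IndepFun S (Z a) μ :=
        hindep s (Finset.subset_insert a s) a (Finset.mem_insert_self a s) ha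
      have hSint : ∀ m : ℕ, Integrable (fun ω => S ω ^ m) μ :=
        integrable_pow_sum_of_indep Z s hintI hindepI
      have hZaint : ∀ m : ℕ, Integrable (fun ω => Z a ω ^ m) μ :=
        hint a (Finset.mem_insert_self a s)
      have hIndPow : ∀ k m : ℕ, IndepFun (fun ω => Z a ω ^ k) (fun ω => S ω ^ m) μ :=
        fun k m => hInd.symm.comp (measurable_id.pow_const k) (measurable_id.pow_const m)
      -- expansion of the integral
      have hexp : ∫ ω, (∑ i ∈ insert a s, Z i ω) ^ (2 * q) ∂μ
          = ∑ k ∈ Finset.range (2 * q + 1),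
              δ ^ k * gM k ^ 2 * (∫ ω, S ω ^ (2 * q - k) ∂μ) * (((2 * q).choose k : ℕ) : ℝ) := by
        have h1 : (fun ω => (∑ i ∈ insert a s, Z i ω) ^ (2 * q))
            = fun ω => ∑ k ∈ Finset.range (2 * q + 1),
                Z a ω ^ k * S ω ^ (2 * q - k) * (((2 * q).choose k : ℕ) : ℝ) := by
          funext ω
          rw [Finset.sum_insert ha, add_pow]
        have hintk : ∀ k ∈ Finset.range (2 * q + 1),
            Integrable (fun ω => Z a ω ^ k * S ω ^ (2 * q - k) * (((2 * q).choose k : ℕ) : ℝ))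
              μ := fun k _ =>
          ((hIndPow k (2 * q - k)).integrable_mul (hZaint k) (hSint _)).mul_const _
        rw [h1, integral_finset_sum _ hintk]
        refine Finset.sum_congr rfl fun k _ => ?_
        have h2 : ∫ ω, Z a ω ^ k * S ω ^ (2 * q - k) ∂μ
            = (∫ ω, Z a ω ^ k ∂μ) * ∫ ω, S ω ^ (2 * q - k) ∂μ :=
          (hIndPow k (2 * q - k)).integral_fun_mul_eq_mul_integral (hZaint k).aestronglyMeasurable (hSint _).aestronglyMeasurable
        rw [integral_mul_const, h2, hmom a (Finset.mem_insert_self a s) k]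
      rw [hexp, Finset.sum_range_succ']
      -- the k = 0 term
      have hhead : δ ^ 0 * gM 0 ^ 2 * (∫ ω, S ω ^ (2 * q - 0) ∂μ) * (((2 * q).choose 0 : ℕ) : ℝ)
          ≤ KC p ^ q * c ^ q * δ ^ (2 * q) := by
        simpa [gM_zero] using IH q hqp
      -- the tail terms
      set Mx : ℝ := ∑ j ∈ Finset.range (p + 1), gM (2 * j) ^ 2 with hMxdef
      have hMx0 : 0 ≤ Mx := Mx_nonneg p
      have hKC1 : 1 ≤ KC p := one_le_KC p
      have hKC0 : 0 < KC p := KC_pos p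
      set T : ℝ := 4 ^ p * Mx * KC p ^ (q - 1) * (c + 1) ^ (q - 1) * δ ^ (2 * q) with hTdef
      have hT0 : 0 ≤ T := by
        rw [hTdef]
        exact mul_nonneg (mul_nonneg (mul_nonneg (mul_nonneg (by positivity) hMx0)
          (pow_nonneg hKC0.le _)) (pow_nonneg (by linarith : (0:ℝ) ≤ c + 1) _))
          (pow_nonneg hδ _)
      have hTerm : ∀ k ∈ Finset.range (2 * q),
          δ ^ (k + 1) * gM (k + 1) ^ 2 * (∫ ω, S ω ^ (2 * q - (k + 1)) ∂μ) *
            (((2 * q).choose (k + 1) : ℕ) : ℝ) ≤ T := by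
        intro k hk
        have hk2q : k + 1 ≤ 2 * q := by
          have := Finset.mem_range.1 hk; omega
        rcases Nat.even_or_odd (k + 1) with he | ho
        swap
        · rw [gM_odd ho]
          simpa using hT0
        obtain ⟨j, hj⟩ := he
        have hj' : k + 1 = 2 * j := by omega
        have hj1 : 1 ≤ j := by omega
        have hjq : j ≤ q := by omega
        have hsub : 2 * q - (k + 1) = 2 * (q - j) := by omega
        have hR0 : 0 ≤ ∫ ω, S ω ^ (2 * (q - j)) ∂μ :=
          integral_nonneg fun ω => Even.pow_nonneg (even_two_mul _) _
        have hR : ∫ ω, S ω ^ (2 * (q - j)) ∂μ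
            ≤ KC p ^ (q - j) * c ^ (q - j) * δ ^ (2 * (q - j)) :=
          IH (q - j) (le_trans (Nat.sub_le _ _) hqp)
        have hC : (((2 * q).choose (k + 1) : ℕ) : ℝ) ≤ 4 ^ p := by
          have h1 : ((2 * q).choose (k + 1) : ℕ) ≤ 2 ^ (2 * q) := choose_le_two_pow' _ _
          have h2 : (2 : ℝ) ^ (2 * q) = 4 ^ q := by
            rw [pow_mul]; norm_num
          have h3 : (4 : ℝ) ^ q ≤ 4 ^ p := pow_le_pow_right₀ (by norm_num) hqp
          calc (((2 * q).choose (k + 1) : ℕ) : ℝ) ≤ (2 : ℝ) ^ (2 * q) := by exact_mod_cast h1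
            _ = 4 ^ q := h2
            _ ≤ 4 ^ p := h3
        have hgm : gM (k + 1) ^ 2 ≤ Mx := by
          rw [hj']
          exact Finset.single_le_sum (f := fun j => gM (2 * j) ^ 2)
            (fun _ _ => sq_nonneg _) (Finset.mem_range.2 (by omega))
        have hδsplit : δ ^ (k + 1) * δ ^ (2 * (q - j)) = δ ^ (2 * q) := by
          rw [← pow_add]; congr 1; omega
        have hKCmono : KC p ^ (q - j) ≤ KC p ^ (q - 1) :=
          pow_le_pow_right₀ hKC1 (by omega)
        have hcard : c ^ (q - j) ≤ (c + 1) ^ (q - 1) :=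
          le_trans (pow_le_pow_left₀ hc0 (by linarith) _)
            (pow_le_pow_right₀ (by linarith) (by omega))
        rw [hsub]
        calc δ ^ (k + 1) * gM (k + 1) ^ 2 * (∫ ω, S ω ^ (2 * (q - j)) ∂μ) *
              (((2 * q).choose (k + 1) : ℕ) : ℝ)
            ≤ δ ^ (k + 1) * Mx * (KC p ^ (q - j) * c ^ (q - j) * δ ^ (2 * (q - j))) * 4 ^ p := by
              gcongr
          _ = 4 ^ p * Mx * (KC p ^ (q - j) * (c ^ (q - j) *
                (δ ^ (k + 1) * δ ^ (2 * (q - j))))) := by ring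
          _ = 4 ^ p * Mx * (KC p ^ (q - j) * (c ^ (q - j) * δ ^ (2 * q))) := by rw [hδsplit]
          _ ≤ 4 ^ p * Mx * (KC p ^ (q - 1) * ((c + 1) ^ (q - 1) * δ ^ (2 * q))) := by
              gcongr
          _ = T := by rw [hTdef]; ring
      have hsum : ∑ k ∈ Finset.range (2 * q),
          δ ^ (k + 1) * gM (k + 1) ^ 2 * (∫ ω, S ω ^ (2 * q - (k + 1)) ∂μ) *
            (((2 * q).choose (k + 1) : ℕ) : ℝ)
          ≤ KC p ^ q * (c + 1) ^ (q - 1) * δ ^ (2 * q) := by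
        calc ∑ k ∈ Finset.range (2 * q),
            δ ^ (k + 1) * gM (k + 1) ^ 2 * (∫ ω, S ω ^ (2 * q - (k + 1)) ∂μ) *
              (((2 * q).choose (k + 1) : ℕ) : ℝ)
            ≤ ∑ _k ∈ Finset.range (2 * q), T := Finset.sum_le_sum hTerm
          _ = (2 * q : ℕ) * T := by rw [Finset.sum_const, Finset.card_range, nsmul_eq_mul]
          _ ≤ (2 * p : ℕ) * T := by
              have : ((2 * q : ℕ) : ℝ) ≤ ((2 * p : ℕ) : ℝ) := by exact_mod_cast by omega
              exact mul_le_mul_of_nonneg_right this hT0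
          _ = (2 * p * 4 ^ p * Mx) * (KC p ^ (q - 1) * (c + 1) ^ (q - 1) * δ ^ (2 * q)) := by
              rw [hTdef]; push_cast; ring
          _ = (KC p - 2) * (KC p ^ (q - 1) * (c + 1) ^ (q - 1) * δ ^ (2 * q)) := by
              rw [hMxdef]; unfold KC; ring
          _ ≤ KC p * (KC p ^ (q - 1) * (c + 1) ^ (q - 1) * δ ^ (2 * q)) := by
              have h4 : (0:ℝ) ≤ KC p ^ (q - 1) * (c + 1) ^ (q - 1) * δ ^ (2 * q) :=
                mul_nonneg (mul_nonneg (pow_nonneg hKC0.le _)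
                  (pow_nonneg (by linarith : (0:ℝ) ≤ c + 1) _)) (pow_nonneg hδ _)
              exact mul_le_mul_of_nonneg_right (by linarith) h4
          _ = KC p ^ q * (c + 1) ^ (q - 1) * δ ^ (2 * q) := by
              rw [show KC p * (KC p ^ (q - 1) * (c + 1) ^ (q - 1) * δ ^ (2 * q))
                  = (KC p ^ (q - 1) * KC p) * ((c + 1) ^ (q - 1) * δ ^ (2 * q)) by ring,
                ← pow_succ, show q - 1 + 1 = q by omega]
              ring
      have hcombine : c ^ q + (c + 1) ^ (q - 1) ≤ (c + 1) ^ q := by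
        have h1 : (c + 1) ^ q = (c + 1) ^ (q - 1) * (c + 1) := by
          rw [← pow_succ, show q - 1 + 1 = q by omega]
        have h2 : c ^ q = c ^ (q - 1) * c := by
          rw [← pow_succ, show q - 1 + 1 = q by omega]
        have h3 : c ^ (q - 1) ≤ (c + 1) ^ (q - 1) := pow_le_pow_left₀ hc0 (by linarith) _
        nlinarith
      have hcardins : ((insert a s).card : ℝ) = c + 1 := by
        rw [Finset.card_insert_of_notMem ha]; push_cast; ring
      rw [hcardins]
      have hKCq0 : (0:ℝ) ≤ KC p ^ q * δ ^ (2 * q) :=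
        mul_nonneg (pow_nonneg hKC0.le _) (pow_nonneg hδ _)
      calc (∑ k ∈ Finset.range (2 * q),
            δ ^ (k + 1) * gM (k + 1) ^ 2 * (∫ ω, S ω ^ (2 * q - (k + 1)) ∂μ) *
              (((2 * q).choose (k + 1) : ℕ) : ℝ))
            + δ ^ 0 * gM 0 ^ 2 * (∫ ω, S ω ^ (2 * q - 0) ∂μ) * (((2 * q).choose 0 : ℕ) : ℝ)
          ≤ KC p ^ q * (c + 1) ^ (q - 1) * δ ^ (2 * q) + KC p ^ q * c ^ q * δ ^ (2 * q) :=
            add_le_add hsum hhead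
        _ = (c ^ q + (c + 1) ^ (q - 1)) * (KC p ^ q * δ ^ (2 * q)) := by ring
        _ ≤ (c + 1) ^ q * (KC p ^ q * δ ^ (2 * q)) :=
            mul_le_mul_of_nonneg_right hcombine hKCq0
        _ = KC p ^ q * (c + 1) ^ q * δ ^ (2 * q) := by ring
lemma markov_pow {W : Ω → ℝ} {j : ℕ}
    (hint : Integrable (fun ω => W ω ^ (2 * j)) μ) {t : ℝ} (ht : 0 < t) :
    μ {ω | t < |W ω|} ≤ ENNReal.ofReal ((∫ ω, W ω ^ (2 * j) ∂μ) / t ^ (2 * j)) := by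
  have hnn : 0 ≤ᵐ[μ] fun ω => W ω ^ (2 * j) :=
    ae_of_all _ fun ω => Even.pow_nonneg (even_two_mul _) _
  have hsub : {ω | t < |W ω|} ⊆ {ω | t ^ (2 * j) ≤ W ω ^ (2 * j)} := by
    intro ω hω
    have h1 : t ^ (2 * j) ≤ |W ω| ^ (2 * j) :=
      pow_le_pow_left₀ ht.le (le_of_lt hω) _
    exact Set.mem_setOf_eq ▸ le_of_le_of_eq h1 ((even_two_mul j).pow_abs _)
  have hM := mul_meas_ge_le_integral_of_nonneg hnn hint (t ^ (2 * j))
  have htp : (0:ℝ) < t ^ (2 * j) := by positivity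
  have h2 : (μ {ω | t ^ (2 * j) ≤ W ω ^ (2 * j)}).toReal
      ≤ (∫ ω, W ω ^ (2 * j) ∂μ) / t ^ (2 * j) := by
    rw [le_div_iff₀ htp]
    rw [measureReal_def] at hM
    linarith [hM]
  calc μ {ω | t < |W ω|} ≤ μ {ω | t ^ (2 * j) ≤ W ω ^ (2 * j)} := measure_mono hsub
    _ ≤ ENNReal.ofReal ((∫ ω, W ω ^ (2 * j) ∂μ) / t ^ (2 * j)) := by
        rw [← ENNReal.ofReal_toReal (measure_ne_top μ _)]
        exact ENNReal.ofReal_le_ofReal h2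

end Abstract

lemma iIndepFun_congr {Ω : Type*} {ι' : Type*} [MeasurableSpace Ω] {μ : Measure Ω}
    {f g : ι' → Ω → ℝ}
    (h : iIndepFun f μ) (hfg : ∀ i, f i =ᵐ[μ] g i) :
    iIndepFun g μ := by
  rw [iIndepFun_iff_measure_inter_preimage_eq_mul] at h ⊢
  intro S sets hsets
  have hpre : ∀ i : ι', (f i ⁻¹' sets i : Set Ω) =ᵐ[μ] (g i ⁻¹' sets i) := by
    intro i
    filter_upwards [hfg i] with ω hω
    show (ω ∈ f i ⁻¹' sets i) = (ω ∈ g i ⁻¹' sets i)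
    rw [Set.mem_preimage, Set.mem_preimage, hω]
  have h2 : (⋂ i ∈ S, g i ⁻¹' sets i : Set Ω) =ᵐ[μ] (⋂ i ∈ S, f i ⁻¹' sets i : Set Ω) := by
    have hall : ∀ᵐ ω ∂μ, ∀ i ∈ (S : Set ι'), f i ω = g i ω :=
      (ae_ball_iff (S : Set ι').to_countable).2 fun i _ => hfg i
    filter_upwards [hall] with ω hω
    show (ω ∈ ⋂ i ∈ S, g i ⁻¹' sets i) = (ω ∈ ⋂ i ∈ S, f i ⁻¹' sets i)
    simp only [Set.mem_iInter, Set.mem_preimage, eq_iff_iff]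
    constructor
    · intro hmem i hi
      rw [hω i (Finset.mem_coe.2 hi)]; exact hmem i hi
    · intro hmem i hi
      rw [← hω i (Finset.mem_coe.2 hi)]; exact hmem i hi
  calc μ (⋂ i ∈ S, g i ⁻¹' sets i) = μ (⋂ i ∈ S, f i ⁻¹' sets i) := measure_congr h2
    _ = ∏ i ∈ S, μ (f i ⁻¹' sets i) := h S hsets
    _ = ∏ i ∈ S, μ (g i ⁻¹' sets i) := Finset.prod_congr rfl fun i _ => measure_congr (hpre i)
section Level

variable {Ω : Type*} [MeasurableSpace Ω] {P : Measure Ω} [IsProbabilityMeasure P]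

lemma level_bound (p : ℕ) (v : ℝ≥0) (hv : v ≠ 0) {K : ℕ}
    (X' Y' : ℕ → Ω → ℝ)
    (hXm : ∀ r, Measurable (X' r)) (hYm : ∀ r, Measurable (Y' r))
    (hXmap : ∀ r, 1 ≤ r → r ≤ K → P.map (X' r) = gaussianReal 0 v)
    (hYmap : ∀ r, 1 ≤ r → r ≤ K → P.map (Y' r) = gaussianReal 0 v)
    (hind : iIndepFun
      (fun q : Bool × Fin K => if q.1 then X' ((q.2 : ℕ) + 1) else Y' ((q.2 : ℕ) + 1)) P)
    (l m : ℕ) (hlm : l < m) (hmK : m ≤ K) {t : ℝ} (ht : 0 < t) :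
    P {ω | t < |∑ r ∈ Finset.Ioc l m, X' r ω * Y' r ω|}
      ≤ ENNReal.ofReal
        (KC p ^ p * ((m - l : ℕ) : ℝ) ^ p * ((v : ℝ)) ^ (2 * p) / t ^ (2 * p)) := by
  classical
  have hK : 0 < K := lt_of_lt_of_le (Nat.zero_lt_of_lt hlm) hmK
  set fam : Bool × Fin K → Ω → ℝ :=
    fun q => if q.1 then X' ((q.2 : ℕ) + 1) else Y' ((q.2 : ℕ) + 1) with hfam
  have hfamm : ∀ q, Measurable (fam q) := by
    rintro ⟨b, i⟩
    cases b
    · simpa [hfam] using hYm _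
    · simpa [hfam] using hXm _
  have hfamX : ∀ i : Fin K, fam (true, i) = X' ((i : ℕ) + 1) := fun i => by simp [hfam]
  have hfamY : ∀ i : Fin K, fam (false, i) = Y' ((i : ℕ) + 1) := fun i => by simp [hfam]
  -- the products
  set Z : Fin K → Ω → ℝ := fun i ω => X' ((i : ℕ) + 1) ω * Y' ((i : ℕ) + 1) ω with hZ
  have hrange : ∀ i : Fin K, 1 ≤ (i : ℕ) + 1 ∧ (i : ℕ) + 1 ≤ K :=
    fun i => ⟨Nat.le_add_left _ _, i.isLt⟩
  -- pairwise independence of X' and Y' at the same index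
  have hXY : ∀ i : Fin K, IndepFun (X' ((i : ℕ) + 1)) (Y' ((i : ℕ) + 1)) P := by
    intro i
    have h := hind.indepFun (i := (true, i)) (j := (false, i)) (by simp)
    rwa [hfamX, hfamY] at h
  -- moments of X', Y'
  have hXint : ∀ i : Fin K, ∀ j : ℕ, Integrable (fun ω => X' ((i : ℕ) + 1) ω ^ j) P := by
    intro i j
    have h0 : Integrable (fun x : ℝ => x ^ j) (P.map (X' ((i : ℕ) + 1))) := by
      rw [hXmap _ (hrange i).1 (hrange i).2]
      exact integrable_pow_gaussianReal hv j
    exact (integrable_map_measure (measurable_id.pow_const j).aestronglyMeasurable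
      (hXm _).aemeasurable).1 h0
  have hYint : ∀ i : Fin K, ∀ j : ℕ, Integrable (fun ω => Y' ((i : ℕ) + 1) ω ^ j) P := by
    intro i j
    have h0 : Integrable (fun x : ℝ => x ^ j) (P.map (Y' ((i : ℕ) + 1))) := by
      rw [hYmap _ (hrange i).1 (hrange i).2]
      exact integrable_pow_gaussianReal hv j
    exact (integrable_map_measure (measurable_id.pow_const j).aestronglyMeasurable
      (hYm _).aemeasurable).1 h0
  have hXmom : ∀ i : Fin K, ∀ j : ℕ,
      ∫ ω, X' ((i : ℕ) + 1) ω ^ j ∂P = Real.sqrt v ^ j * gM j := by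
    intro i j
    rw [← integral_pow_gaussianReal v j, ← hXmap _ (hrange i).1 (hrange i).2]
    exact (integral_map (hXm _).aemeasurable
      (measurable_id.pow_const j).aestronglyMeasurable).symm
  have hYmom : ∀ i : Fin K, ∀ j : ℕ,
      ∫ ω, Y' ((i : ℕ) + 1) ω ^ j ∂P = Real.sqrt v ^ j * gM j := by
    intro i j
    rw [← integral_pow_gaussianReal v j, ← hYmap _ (hrange i).1 (hrange i).2]
    exact (integral_map (hYm _).aemeasurable
      (measurable_id.pow_const j).aestronglyMeasurable).symm
  -- moments of Z
  have hZpow : ∀ (i : Fin K) (j : ℕ),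
      (fun ω => Z i ω ^ j) = fun ω => X' ((i : ℕ) + 1) ω ^ j * Y' ((i : ℕ) + 1) ω ^ j :=
    fun i j => funext fun ω => mul_pow _ _ _
  have hZint : ∀ i : Fin K, ∀ j : ℕ, Integrable (fun ω => Z i ω ^ j) P := by
    intro i j
    rw [hZpow i j]
    exact ((hXY i).comp (measurable_id.pow_const j) (measurable_id.pow_const j)).integrable_mul
      (hXint i j) (hYint i j)
  have hZmom : ∀ i : Fin K, ∀ j : ℕ, ∫ ω, Z i ω ^ j ∂P = ((v : ℝ)) ^ j * gM j ^ 2 := by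
    intro i j
    rw [hZpow i j]
    have h1 : ∫ ω, X' ((i : ℕ) + 1) ω ^ j * Y' ((i : ℕ) + 1) ω ^ j ∂P
        = (∫ ω, X' ((i : ℕ) + 1) ω ^ j ∂P) * ∫ ω, Y' ((i : ℕ) + 1) ω ^ j ∂P :=
      ((hXY i).comp (measurable_id.pow_const j)
        (measurable_id.pow_const j)).integral_fun_mul_eq_mul_integral (hXint i j).aestronglyMeasurable
          (hYint i j).aestronglyMeasurable
    rw [h1, hXmom i j, hYmom i j]
    have h2 : Real.sqrt v ^ j * gM j * (Real.sqrt v ^ j * gM j)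
        = (Real.sqrt v ^ 2) ^ j * gM j ^ 2 := by ring
    rw [h2, Real.sq_sqrt v.coe_nonneg]
  -- independence of sums from single coordinates
  have hZindep : ∀ (J : Finset (Fin K)) (a : Fin K), a ∉ J →
      IndepFun (fun ω => ∑ i ∈ J, Z i ω) (Z a) P := by
    intro J a haJ
    set Sf : Finset (Bool × Fin K) := Finset.univ ×ˢ J with hSf
    set Tf : Finset (Bool × Fin K) := Finset.univ ×ˢ {a} with hTf
    have hdisj : Disjoint Sf Tf := by
      rw [Finset.disjoint_left]
      rintro ⟨b, i⟩ hS hT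
      rw [hSf, Finset.mem_product] at hS
      rw [hTf, Finset.mem_product] at hT
      have : i = a := by simpa using hT.2
      exact haJ (this ▸ hS.2)
    have hbig := hind.indepFun_finset Sf Tf hdisj hfamm
    let φ : ({x // x ∈ Sf} → ℝ) → ℝ := fun u => ∑ x ∈ J.attach,
      u ⟨(true, x.1), Finset.mem_product.2 ⟨Finset.mem_univ _, x.2⟩⟩ *
        u ⟨(false, x.1), Finset.mem_product.2 ⟨Finset.mem_univ _, x.2⟩⟩
    have hφ : Measurable φ :=
      Finset.measurable_sum _ fun x _ => (measurable_pi_apply _).mul (measurable_pi_apply _)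
    let ψ : ({x // x ∈ Tf} → ℝ) → ℝ := fun u =>
      u ⟨(true, a), Finset.mem_product.2 ⟨Finset.mem_univ _, Finset.mem_singleton_self a⟩⟩ *
        u ⟨(false, a), Finset.mem_product.2 ⟨Finset.mem_univ _, Finset.mem_singleton_self a⟩⟩
    have hψ : Measurable ψ := (measurable_pi_apply _).mul (measurable_pi_apply _)
    have hcomp := hbig.comp hφ hψ
    have hl : (φ ∘ fun ω (i : {x // x ∈ Sf}) => fam i.1 ω) = fun ω => ∑ i ∈ J, Z i ω := by
      funext ω
      show ∑ x ∈ J.attach, fam (true, x.1) ω * fam (false, x.1) ω = ∑ i ∈ J, Z i ω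
      rw [← Finset.sum_attach J (fun i => Z i ω)]
      refine Finset.sum_congr rfl fun x _ => ?_
      rw [hfamX, hfamY]
    have hr : (ψ ∘ fun ω (i : {x // x ∈ Tf}) => fam i.1 ω) = Z a := by
      funext ω
      show fam (true, a) ω * fam (false, a) ω = Z a ω
      rw [hfamX, hfamY]
    rw [hl, hr] at hcomp
    exact hcomp
  -- reindex the sum
  set emb : ℕ → Fin K := fun r => ⟨(r - 1) % K, Nat.mod_lt _ hK⟩ with hemb
  have hembv : ∀ r, 1 ≤ r → r ≤ K → ((emb r : ℕ) + 1 = r) := by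
    intro r h1 h2
    have h3 : r - 1 < K := by omega
    simp only [hemb, Nat.mod_eq_of_lt h3]
    omega
  set J : Finset (Fin K) := (Finset.Ioc l m).image emb with hJ
  have hmemr : ∀ r ∈ Finset.Ioc l m, 1 ≤ r ∧ r ≤ K := by
    intro r hr
    rw [Finset.mem_Ioc] at hr
    omega
  have hinj : ∀ r ∈ Finset.Ioc l m, ∀ r' ∈ Finset.Ioc l m, emb r = emb r' → r = r' := by
    intro r hr r' hr' h
    have h1 := hembv r (hmemr r hr).1 (hmemr r hr).2
    have h2 := hembv r' (hmemr r' hr').1 (hmemr r' hr').2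
    rw [← h1, ← h2, h]
  have hcard : (J.card : ℝ) = ((m - l : ℕ) : ℝ) := by
    rw [hJ, Finset.card_image_of_injOn hinj, Nat.card_Ioc]
  have hsumJ : ∀ ω, ∑ i ∈ J, Z i ω = ∑ r ∈ Finset.Ioc l m, X' r ω * Y' r ω := by
    intro ω
    rw [hJ, Finset.sum_image hinj]
    refine Finset.sum_congr rfl fun r hr => ?_
    rw [hZ]
    simp only
    rw [hembv r (hmemr r hr).1 (hmemr r hr).2]
  -- apply the moment bound and Markov
  have hmom := moment_pow_sum p ((v : ℝ)) v.coe_nonneg Z J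
    (fun i _ => hZint i) (fun J' _ a _ haJ' => hZindep J' a haJ') (fun i _ => hZmom i)
    p le_rfl
  have hintW : Integrable (fun ω => (∑ i ∈ J, Z i ω) ^ (2 * p)) P :=
    integrable_pow_sum_of_indep Z J (fun i _ => hZint i)
      (fun J' _ a _ haJ' => hZindep J' a haJ') (2 * p)
  have hmarkov := markov_pow (μ := P) (W := fun ω => ∑ i ∈ J, Z i ω) hintW ht
  have hseteq : {ω | t < |∑ r ∈ Finset.Ioc l m, X' r ω * Y' r ω|}
      = {ω | t < |∑ i ∈ J, Z i ω|} := by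
    ext ω; rw [Set.mem_setOf_eq, Set.mem_setOf_eq, hsumJ ω]
  rw [hseteq]
  refine le_trans hmarkov (ENNReal.ofReal_le_ofReal ?_)
  rw [div_le_div_iff₀ (by positivity) (by positivity)]
  rw [hcard] at hmom
  have htp : (0:ℝ) < t ^ (2 * p) := by positivity
  nlinarith [hmom, htp]

end Level
lemma pair_calc {α β : ℝ} (hβhalf : 1/2 ≤ β) (p n : ℕ) {d C : ℝ}
    (hd : 1 ≤ d) (hC : 0 ≤ C) :
    C ^ p * d ^ p * (((2:ℝ) ^ n)⁻¹) ^ (2 * p) /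
      (d ^ β * (((2:ℝ) ^ n)⁻¹) ^ (2 * α)) ^ (2 * p)
    ≤ C ^ p * (2:ℝ) ^ (-(2 * (p:ℝ) * (1 - 2 * α)) * n) := by
  have hd0 : (0:ℝ) < d := lt_of_lt_of_le one_pos hd
  set Δ : ℝ := ((2:ℝ) ^ n)⁻¹ with hΔ
  have hΔ0 : 0 < Δ := by positivity
  have hΔeq : Δ = (2:ℝ) ^ (-(n:ℝ)) := by
    rw [hΔ, ← Real.rpow_natCast 2 n, ← Real.rpow_neg (by norm_num : (0:ℝ) ≤ 2)]
  have hkey : C ^ p * d ^ p * Δ ^ (2 * p) / (d ^ β * Δ ^ (2 * α)) ^ (2 * p)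
      = C ^ p * (d ^ ((p : ℝ) - β * ((2 * p : ℕ) : ℝ))
          * Δ ^ (((2 * p : ℕ) : ℝ) - 2 * α * ((2 * p : ℕ) : ℝ))) := by
    rw [mul_pow, ← Real.rpow_natCast (d ^ β) (2 * p), ← Real.rpow_natCast (Δ ^ (2 * α)) (2 * p),
      ← Real.rpow_mul hd0.le, ← Real.rpow_mul hΔ0.le,
      Real.rpow_sub hd0, Real.rpow_sub hΔ0,
      ← Real.rpow_natCast d p, ← Real.rpow_natCast Δ (2 * p)]
    field_simp
  rw [hkey]
  have h1 : d ^ ((p : ℝ) - β * ((2 * p : ℕ) : ℝ)) ≤ 1 := by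
    apply Real.rpow_le_one_of_one_le_of_nonpos hd
    push_cast
    nlinarith [Nat.cast_nonneg (α := ℝ) p]
  have h2 : Δ ^ (((2 * p : ℕ) : ℝ) - 2 * α * ((2 * p : ℕ) : ℝ))
      = (2:ℝ) ^ (-(2 * (p:ℝ) * (1 - 2 * α)) * n) := by
    rw [hΔeq, ← Real.rpow_mul (by norm_num : (0:ℝ) ≤ 2)]
    congr 1
    push_cast
    ring
  have hΔf0 : 0 ≤ Δ ^ (((2 * p : ℕ) : ℝ) - 2 * α * ((2 * p : ℕ) : ℝ)) :=
    Real.rpow_nonneg hΔ0.le _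
  calc C ^ p * (d ^ ((p : ℝ) - β * ((2 * p : ℕ) : ℝ))
          * Δ ^ (((2 * p : ℕ) : ℝ) - 2 * α * ((2 * p : ℕ) : ℝ)))
      ≤ C ^ p * (1 * Δ ^ (((2 * p : ℕ) : ℝ) - 2 * α * ((2 * p : ℕ) : ℝ))) := by
        apply mul_le_mul_of_nonneg_left _ (pow_nonneg hC p)
        exact mul_le_mul_of_nonneg_right h1 hΔf0
    _ = C ^ p * (2:ℝ) ^ (-(2 * (p:ℝ) * (1 - 2 * α)) * n) := by rw [one_mul, h2]

open scoped ENNReal in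
lemma union_calc {ε C : ℝ} (hC : 0 ≤ C) (n N : ℕ) (hN : (N : ℝ) ≤ (2:ℝ) ^ (2 * n)) :
    (N : ℝ) * (C * (2:ℝ) ^ (-(2 + ε) * (n : ℝ))) ≤ C * ((2:ℝ) ^ (-ε : ℝ)) ^ n := by
  have h1 : ((2:ℝ) ^ (-ε : ℝ)) ^ n = (2:ℝ) ^ (-ε * (n:ℝ)) := by
    rw [← Real.rpow_natCast ((2:ℝ) ^ (-ε : ℝ)) n, ← Real.rpow_mul (by norm_num : (0:ℝ) ≤ 2)]
  have h2 : (2:ℝ) ^ (2 * n) * (2:ℝ) ^ (-(2 + ε) * (n:ℝ)) = (2:ℝ) ^ (-ε * (n:ℝ)) := by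
    rw [← Real.rpow_natCast 2 (2 * n), ← Real.rpow_add (by norm_num : (0:ℝ) < 2)]
    congr 1
    push_cast
    ring
  have h3 : (0:ℝ) ≤ (2:ℝ) ^ (-(2 + ε) * (n:ℝ)) := Real.rpow_nonneg (by norm_num) _
  calc (N : ℝ) * (C * (2:ℝ) ^ (-(2 + ε) * (n:ℝ)))
      = C * ((N:ℝ) * (2:ℝ) ^ (-(2 + ε) * (n:ℝ))) := by ring
    _ ≤ C * ((2:ℝ) ^ (2 * n) * (2:ℝ) ^ (-(2 + ε) * (n:ℝ))) :=
        mul_le_mul_of_nonneg_left (mul_le_mul_of_nonneg_right hN h3) hC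
    _ = C * ((2:ℝ) ^ (-ε : ℝ)) ^ n := by rw [h2, h1]


/-- **Lemma (a.s. finitely many record breakers for the discrete Lévy area walks).**
Fix `α ∈ (1/3,1/2)` and `β ∈ (1−α,2α)`. For each `n ≥ 1`, let `{Xᵣⁿ, Yᵣⁿ : 1 ≤ r ≤ 2^{n−1}}`
be `2ⁿ` mutually independent random variables with law `N(0, Δₙ)`, `Δₙ = 2^{−n}`, and set
`Lⁿ(k) = Σ_{r=1}^k Xᵣⁿ Yᵣⁿ`. Then, almost surely, there is a finite `N₂` such that for all
`n ≥ N₂` and all `0 ≤ l < m ≤ 2^{n−1}`, `|Lⁿ(m) − Lⁿ(l)| ≤ (m−l)^β Δₙ^{2α}`. -/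
theorem levy_walk_records_finite
    (α β : ℝ) (hα1 : 1 / 3 < α) (hα2 : α < 1 / 2)
    (hβ1 : 1 - α < β) (hβ2 : β < 2 * α)
    {Ω : Type*} [MeasurableSpace Ω] (P : Measure Ω) [IsProbabilityMeasure P]
    (X Y : ℕ → ℕ → Ω → ℝ)
    -- within each level `n ≥ 1`, the `2ⁿ` variables `Xᵣⁿ, Yᵣⁿ`, `1 ≤ r ≤ 2^{n−1}`, are
    -- mutually independent
    (hIndep : ∀ n : ℕ, 1 ≤ n →
      iIndepFun
        (fun p : Bool × Fin (2 ^ (n - 1)) =>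
          if p.1 then X n ((p.2 : ℕ) + 1) else Y n ((p.2 : ℕ) + 1)) P)
    -- each has the centered Gaussian law with variance `Δₙ = 2^{−n}`
    (hX : ∀ n r : ℕ, 1 ≤ n → 1 ≤ r → r ≤ 2 ^ (n - 1) →
      P.map (X n r) = gaussianReal 0 ((2 : ℝ≥0)⁻¹ ^ n))
    (hY : ∀ n r : ℕ, 1 ≤ n → 1 ≤ r → r ≤ 2 ^ (n - 1) →
      P.map (Y n r) = gaussianReal 0 ((2 : ℝ≥0)⁻¹ ^ n)) :
    ∀ᵐ ω ∂P, ∃ N₂ : ℕ, ∀ n : ℕ, N₂ ≤ n → ∀ l m : ℕ, l < m → m ≤ 2 ^ (n - 1) →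
      |(∑ r ∈ Finset.Icc 1 m, X n r ω * Y n r ω) -
        ∑ r ∈ Finset.Icc 1 l, X n r ω * Y n r ω| ≤
          ((m : ℝ) - l) ^ β * (((2 : ℝ) ^ n)⁻¹) ^ (2 * α) := by
  classical
  have hβhalf : (1:ℝ)/2 ≤ β := by linarith
  have h12α : (0:ℝ) < 1 - 2 * α := by linarith
  -- choice of the moment order
  set p : ℕ := ⌈(1:ℝ) / (1 - 2 * α)⌉₊ + 1 with hpdef
  have hpgt : (1:ℝ) / (1 - 2 * α) < (p : ℝ) := by
    calc (1:ℝ) / (1 - 2 * α) ≤ (⌈(1:ℝ) / (1 - 2 * α)⌉₊ : ℝ) := Nat.le_ceil _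
      _ < p := by rw [hpdef]; push_cast; linarith
  have hεpos : 0 < 2 * (p:ℝ) * (1 - 2 * α) - 2 := by
    have h := (div_lt_iff₀ h12α).1 hpgt
    linarith
  set ε : ℝ := 2 * (p:ℝ) * (1 - 2 * α) - 2 with hεdef
  -- measurable modifications
  have hXae : ∀ n r : ℕ, 1 ≤ n → 1 ≤ r → r ≤ 2 ^ (n - 1) → AEMeasurable (X n r) P :=
    fun n r h1 h2 h3 => aemeasurable_of_map_neZero (by rw [hX n r h1 h2 h3]; infer_instance)
  have hYae : ∀ n r : ℕ, 1 ≤ n → 1 ≤ r → r ≤ 2 ^ (n - 1) → AEMeasurable (Y n r) P :=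
    fun n r h1 h2 h3 => aemeasurable_of_map_neZero (by rw [hY n r h1 h2 h3]; infer_instance)
  obtain ⟨X', hX'm, hX'ae⟩ : ∃ X' : ℕ → ℕ → Ω → ℝ, (∀ n r, Measurable (X' n r)) ∧
      (∀ n r, 1 ≤ n → 1 ≤ r → r ≤ 2 ^ (n - 1) → X n r =ᵐ[P] X' n r) := by
    refine ⟨fun n r => if h : 1 ≤ n ∧ 1 ≤ r ∧ r ≤ 2 ^ (n - 1)
      then (hXae n r h.1 h.2.1 h.2.2).mk (X n r) else 0, fun n r => ?_, fun n r h1 h2 h3 => ?_⟩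
    · dsimp only
      split_ifs with h
      exacts [(hXae n r h.1 h.2.1 h.2.2).measurable_mk, measurable_const]
    · dsimp only
      rw [dif_pos ⟨h1, h2, h3⟩]
      exact (hXae n r h1 h2 h3).ae_eq_mk
  obtain ⟨Y', hY'm, hY'ae⟩ : ∃ Y' : ℕ → ℕ → Ω → ℝ, (∀ n r, Measurable (Y' n r)) ∧
      (∀ n r, 1 ≤ n → 1 ≤ r → r ≤ 2 ^ (n - 1) → Y n r =ᵐ[P] Y' n r) := by
    refine ⟨fun n r => if h : 1 ≤ n ∧ 1 ≤ r ∧ r ≤ 2 ^ (n - 1)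
      then (hYae n r h.1 h.2.1 h.2.2).mk (Y n r) else 0, fun n r => ?_, fun n r h1 h2 h3 => ?_⟩
    · dsimp only
      split_ifs with h
      exacts [(hYae n r h.1 h.2.1 h.2.2).measurable_mk, measurable_const]
    · dsimp only
      rw [dif_pos ⟨h1, h2, h3⟩]
      exact (hYae n r h1 h2 h3).ae_eq_mk
  have hX'map : ∀ n r, 1 ≤ n → 1 ≤ r → r ≤ 2 ^ (n - 1) →
      P.map (X' n r) = gaussianReal 0 ((2 : ℝ≥0)⁻¹ ^ n) := fun n r h1 h2 h3 => by
    rw [← Measure.map_congr (hX'ae n r h1 h2 h3), hX n r h1 h2 h3]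
  have hY'map : ∀ n r, 1 ≤ n → 1 ≤ r → r ≤ 2 ^ (n - 1) →
      P.map (Y' n r) = gaussianReal 0 ((2 : ℝ≥0)⁻¹ ^ n) := fun n r h1 h2 h3 => by
    rw [← Measure.map_congr (hY'ae n r h1 h2 h3), hY n r h1 h2 h3]
  have hIndep' : ∀ n : ℕ, 1 ≤ n → iIndepFun
      (fun q : Bool × Fin (2 ^ (n - 1)) =>
        if q.1 then X' n ((q.2 : ℕ) + 1) else Y' n ((q.2 : ℕ) + 1)) P := by
    intro n hn
    refine iIndepFun_congr (hIndep n hn) ?_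
    rintro ⟨b, i⟩
    have hi1 : 1 ≤ (i : ℕ) + 1 := Nat.le_add_left _ _
    have hi2 : (i : ℕ) + 1 ≤ 2 ^ (n - 1) := i.isLt
    cases b
    · simpa using hY'ae n ((i : ℕ) + 1) hn hi1 hi2
    · simpa using hX'ae n ((i : ℕ) + 1) hn hi1 hi2
  -- the bad events
  set W : ℕ → ℕ → ℕ → Ω → ℝ :=
    fun n l m ω => ∑ r ∈ Finset.Ioc l m, X' n r ω * Y' n r ω with hWdef
  set tlm : ℕ → ℕ → ℕ → ℝ :=
    fun n l m => ((m - l : ℕ) : ℝ) ^ β * (((2:ℝ) ^ n)⁻¹) ^ (2 * α) with htlm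
  set E : ℕ → Set Ω := fun n => ⋃ (lm : ℕ × ℕ) (_ : lm.1 < lm.2 ∧ lm.2 ≤ 2 ^ (n - 1)),
      {ω | tlm n lm.1 lm.2 < |W n lm.1 lm.2 ω|} with hEdef
  have hvcast : ∀ n : ℕ, (((2 : ℝ≥0)⁻¹ ^ n : ℝ≥0) : ℝ) = ((2:ℝ) ^ n)⁻¹ := by
    intro n
    push_cast
    rw [inv_pow]
  -- per-pair bound
  have hpair : ∀ n, 1 ≤ n → ∀ l m : ℕ, l < m → m ≤ 2 ^ (n - 1) →
      P {ω | tlm n l m < |W n l m ω|}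
        ≤ ENNReal.ofReal (KC p ^ p * (2:ℝ) ^ (-(2 + ε) * (n : ℝ))) := by
    intro n hn l m hlm hmK
    have hd1 : (1:ℝ) ≤ ((m - l : ℕ) : ℝ) := by
      have h : 1 ≤ m - l := by omega
      exact_mod_cast h
    have ht0 : 0 < tlm n l m := by
      rw [htlm]
      exact mul_pos (Real.rpow_pos_of_pos (by linarith) _)
        (Real.rpow_pos_of_pos (by positivity) _)
    have hlev := level_bound (P := P) p ((2 : ℝ≥0)⁻¹ ^ n)
      (pow_ne_zero _ (by norm_num)) (X' n) (Y' n) (hX'm n) (hY'm n)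
      (fun r h1 h2 => hX'map n r hn h1 h2) (fun r h1 h2 => hY'map n r hn h1 h2)
      (hIndep' n hn) l m hlm hmK ht0
    refine le_trans hlev (ENNReal.ofReal_le_ofReal ?_)
    rw [hvcast n]
    have hcalc := pair_calc (α := α) (β := β) hβhalf p n hd1 (KC_pos p).le
      (d := ((m - l : ℕ) : ℝ)) (C := KC p)
    have hexp : (2:ℝ) ^ (-(2 * (p:ℝ) * (1 - 2 * α)) * (n:ℝ))
        = (2:ℝ) ^ (-(2 + ε) * (n : ℝ)) := by
      congr 1
      rw [hεdef]
      ring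
    rw [htlm] at *
    calc KC p ^ p * ((m - l : ℕ) : ℝ) ^ p * (((2:ℝ) ^ n)⁻¹) ^ (2 * p) /
          (((m - l : ℕ) : ℝ) ^ β * (((2:ℝ) ^ n)⁻¹) ^ (2 * α)) ^ (2 * p)
        ≤ KC p ^ p * (2:ℝ) ^ (-(2 * (p:ℝ) * (1 - 2 * α)) * (n:ℝ)) := hcalc
      _ = KC p ^ p * (2:ℝ) ^ (-(2 + ε) * (n : ℝ)) := by rw [hexp]
  -- union bound over pairs
  have hEbound : ∀ n, 1 ≤ n →
      P (E n) ≤ ENNReal.ofReal (KC p ^ p * ((2:ℝ) ^ (-ε : ℝ)) ^ n) := by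
    intro n hn
    set K : ℕ := 2 ^ (n - 1) with hKdef
    set Sv : Finset (ℕ × ℕ) :=
      (Finset.range (K + 1) ×ˢ Finset.range (K + 1)).filter
        (fun lm => lm.1 < lm.2 ∧ lm.2 ≤ K) with hSv
    have hEsub : E n ⊆ ⋃ lm ∈ Sv, {ω | tlm n lm.1 lm.2 < |W n lm.1 lm.2 ω|} := by
      intro ω hω
      rw [hEdef] at hω
      simp only [Set.mem_iUnion] at hω ⊢
      obtain ⟨lm, hcond, hmem⟩ := hω
      refine ⟨lm, ?_, hmem⟩
      rw [hSv, Finset.mem_filter, Finset.mem_product, Finset.mem_range, Finset.mem_range]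
      exact ⟨⟨by omega, by omega⟩, hcond⟩
    have hterm : ∀ lm ∈ Sv, P {ω | tlm n lm.1 lm.2 < |W n lm.1 lm.2 ω|}
        ≤ ENNReal.ofReal (KC p ^ p * (2:ℝ) ^ (-(2 + ε) * (n : ℝ))) := by
      intro lm hlm'
      rw [hSv, Finset.mem_filter] at hlm'
      exact hpair n hn lm.1 lm.2 hlm'.2.1 hlm'.2.2
    have hcard : Sv.card ≤ (K + 1) ^ 2 := by
      calc Sv.card ≤ (Finset.range (K + 1) ×ˢ Finset.range (K + 1)).card :=
            Finset.card_filter_le _ _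
        _ = (K + 1) ^ 2 := by rw [Finset.card_product, Finset.card_range]; ring
    have hNle : (((K + 1) ^ 2 : ℕ) : ℝ) ≤ (2:ℝ) ^ (2 * n) := by
      have h1 : K + 1 ≤ 2 ^ n := by
        have h2 : 2 ^ n = 2 * 2 ^ (n - 1) := by
          have h := pow_succ' 2 (n - 1)
          rwa [Nat.sub_add_cancel hn] at h
        have h3 : 1 ≤ 2 ^ (n - 1) := Nat.one_le_two_pow
        omega
      have h4 : (K + 1) ^ 2 ≤ 2 ^ (2 * n) := by
        calc (K + 1) ^ 2 ≤ (2 ^ n) ^ 2 := Nat.pow_le_pow_left h1 2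
          _ = 2 ^ (2 * n) := by rw [← pow_mul, Nat.mul_comm]
      calc (((K + 1) ^ 2 : ℕ) : ℝ) ≤ ((2 ^ (2 * n) : ℕ) : ℝ) := by exact_mod_cast h4
        _ = (2:ℝ) ^ (2 * n) := by push_cast; ring
    calc P (E n) ≤ P (⋃ lm ∈ Sv, {ω | tlm n lm.1 lm.2 < |W n lm.1 lm.2 ω|}) :=
          measure_mono hEsub
      _ ≤ ∑ lm ∈ Sv, P {ω | tlm n lm.1 lm.2 < |W n lm.1 lm.2 ω|} :=
          measure_biUnion_finset_le _ _
      _ ≤ ∑ _lm ∈ Sv, ENNReal.ofReal (KC p ^ p * (2:ℝ) ^ (-(2 + ε) * (n : ℝ))) :=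
          Finset.sum_le_sum hterm
      _ = Sv.card • ENNReal.ofReal (KC p ^ p * (2:ℝ) ^ (-(2 + ε) * (n : ℝ))) :=
          Finset.sum_const _
      _ = (Sv.card : ENNReal) * ENNReal.ofReal (KC p ^ p * (2:ℝ) ^ (-(2 + ε) * (n : ℝ))) :=
          nsmul_eq_mul _ _
      _ ≤ (((K + 1) ^ 2 : ℕ) : ENNReal) *
            ENNReal.ofReal (KC p ^ p * (2:ℝ) ^ (-(2 + ε) * (n : ℝ))) :=
          mul_le_mul_left (by exact_mod_cast hcard) _
      _ = ENNReal.ofReal ((((K + 1) ^ 2 : ℕ) : ℝ) *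
            (KC p ^ p * (2:ℝ) ^ (-(2 + ε) * (n : ℝ)))) := by
          rw [← ENNReal.ofReal_natCast ((K + 1) ^ 2),
            ← ENNReal.ofReal_mul (by positivity)]
      _ ≤ ENNReal.ofReal (KC p ^ p * ((2:ℝ) ^ (-ε : ℝ)) ^ n) :=
          ENNReal.ofReal_le_ofReal
            (union_calc (pow_nonneg (KC_pos p).le p) n ((K + 1) ^ 2) hNle)
  -- Borel--Cantelli
  have hρ0 : (0:ℝ) ≤ (2:ℝ) ^ (-ε : ℝ) := Real.rpow_nonneg (by norm_num) _
  have hρ1 : (2:ℝ) ^ (-ε : ℝ) < 1 :=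
    Real.rpow_lt_one_of_one_lt_of_neg one_lt_two (by linarith)
  have hsummable : Summable (fun i : ℕ => KC p ^ p * ((2:ℝ) ^ (-ε : ℝ)) ^ (i + 1)) := by
    have h := (summable_geometric_of_lt_one hρ0 hρ1).mul_left
      (KC p ^ p * (2:ℝ) ^ (-ε : ℝ))
    refine h.congr fun i => ?_
    ring
  have htsum : (∑' i : ℕ, P (E (i + 1))) ≠ ⊤ := by
    have hle : ∀ i : ℕ, P (E (i + 1))
        ≤ ENNReal.ofReal (KC p ^ p * ((2:ℝ) ^ (-ε : ℝ)) ^ (i + 1)) :=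
      fun i => hEbound (i + 1) (Nat.le_add_left 1 i)
    have hb : (∑' i : ℕ, P (E (i + 1)))
        ≤ ENNReal.ofReal (∑' i : ℕ, KC p ^ p * ((2:ℝ) ^ (-ε : ℝ)) ^ (i + 1)) := by
      rw [ENNReal.ofReal_tsum_of_nonneg
        (fun i => mul_nonneg (pow_nonneg (KC_pos p).le _) (pow_nonneg hρ0 _)) hsummable]
      exact ENNReal.tsum_le_tsum hle
    exact (lt_of_le_of_lt hb ENNReal.ofReal_lt_top).ne
  have hae := MeasureTheory.ae_eventually_notMem htsum
  have haeeq : ∀ᵐ ω ∂P, ∀ n r : ℕ, 1 ≤ n → 1 ≤ r → r ≤ 2 ^ (n - 1) →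
      X n r ω = X' n r ω ∧ Y n r ω = Y' n r ω := by
    rw [ae_all_iff]
    intro n
    rw [ae_all_iff]
    intro r
    by_cases h : 1 ≤ n ∧ 1 ≤ r ∧ r ≤ 2 ^ (n - 1)
    · filter_upwards [hX'ae n r h.1 h.2.1 h.2.2, hY'ae n r h.1 h.2.1 h.2.2] with ω h1 h2
      exact fun _ _ _ => ⟨h1, h2⟩
    · exact ae_of_all _ fun ω h1 h2 h3 => absurd ⟨h1, h2, h3⟩ h
  filter_upwards [hae, haeeq] with ω hω hωeq
  obtain ⟨N, hN⟩ := eventually_atTop.1 hω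
  refine ⟨N + 1, fun n hn l m hlm hmK => ?_⟩
  have hn1 : 1 ≤ n := by omega
  have hωE : ω ∉ E n := by
    have h := hN (n - 1) (by omega)
    rwa [show n - 1 + 1 = n by omega] at h
  have hnot : ¬ (tlm n l m < |W n l m ω|) := by
    intro hcon
    exact hωE (by
      rw [hEdef]
      exact Set.mem_iUnion.2 ⟨(l, m), Set.mem_iUnion.2 ⟨⟨hlm, hmK⟩, hcon⟩⟩)
  push_neg at hnot
  have hsplit : (∑ r ∈ Finset.Icc 1 m, X n r ω * Y n r ω) -
      ∑ r ∈ Finset.Icc 1 l, X n r ω * Y n r ω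
      = ∑ r ∈ Finset.Ioc l m, X n r ω * Y n r ω := by
    have h1 : (∑ r ∈ Finset.Ioc 0 l, X n r ω * Y n r ω) +
        ∑ r ∈ Finset.Ioc l m, X n r ω * Y n r ω
        = ∑ r ∈ Finset.Ioc 0 m, X n r ω * Y n r ω :=
      Finset.sum_Ioc_consecutive _ (Nat.zero_le l) (le_of_lt hlm)
    have h2 : ∀ k : ℕ, Finset.Icc 1 k = Finset.Ioc 0 k := fun k => by
      rw [← Finset.Icc_add_one_left_eq_Ioc, zero_add]
    rw [h2 m, h2 l]
    linarith
  have hXeq : ∑ r ∈ Finset.Ioc l m, X n r ω * Y n r ω = W n l m ω := by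
    rw [hWdef]
    refine Finset.sum_congr rfl fun r hr => ?_
    rw [Finset.mem_Ioc] at hr
    have h1 : 1 ≤ r := by omega
    have h2 : r ≤ 2 ^ (n - 1) := le_trans hr.2 hmK
    rw [(hωeq n r hn1 h1 h2).1, (hωeq n r hn1 h1 h2).2]
  rw [hsplit, hXeq]
  refine le_trans hnot (le_of_eq ?_)
  rw [htlm]
  dsimp only
  rw [Nat.cast_sub hlm.le]
end

section
/- Fix α ∈ (1/3, 1/2) and β ∈ (1−α, 2α), let Δ > 0 and let q ≥ 1 be an integer. Let X_1, …, X_q, Y_1, …, Y_q be mutually independent random variables, each with law N(0, Δ), and set S = Σ_{r=1}^q X_r Y_r. Then for every θ' ∈ (0, 1/4): P( S > q^β Δ^{2α} ) ≤ exp( −θ'·q^{β−1/2}·Δ^{2α−1} + 1 ). -/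
open MeasureTheory ProbabilityTheory Finset
open scoped NNReal ENNReal

open Real

lemma aux_aemeasurable_of_map_gaussian {Ω : Type*} [MeasurableSpace Ω] {P : Measure Ω}
    {f : Ω → ℝ} {μ : ℝ} {v : ℝ≥0} (h : P.map f = gaussianReal μ v) : AEMeasurable f P := by
  by_contra hc
  rw [Measure.map_of_not_aemeasurable hc] at h
  have h1 : (gaussianReal μ v) Set.univ = 1 := measure_univ
  rw [← h] at h1
  simp at h1

lemma aux_integral_gaussianReal {Δ : ℝ≥0} (hΔ : Δ ≠ 0) (g : ℝ → ℝ) :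
    ∫ x, g x ∂(gaussianReal 0 Δ) = ∫ x, gaussianPDFReal 0 Δ x * g x := by
  rw [gaussianReal_of_var_ne_zero _ hΔ]
  have h1 : gaussianPDF 0 Δ = fun x => ((gaussianPDFReal 0 Δ x).toNNReal : ℝ≥0∞) := rfl
  rw [h1, integral_withDensity_eq_integral_smul
    ((measurable_gaussianPDFReal 0 Δ).real_toNNReal) g]
  refine integral_congr_ae (Filter.Eventually.of_forall fun x => ?_)
  simp [NNReal.smul_def, Real.coe_toNNReal _ (gaussianPDFReal_nonneg 0 Δ x)]

lemma aux_integrable_gaussianReal_iff {Δ : ℝ≥0} (hΔ : Δ ≠ 0) (g : ℝ → ℝ) :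
    Integrable g (gaussianReal 0 Δ) ↔
      Integrable (fun x => gaussianPDFReal 0 Δ x * g x) volume := by
  rw [gaussianReal_of_var_ne_zero _ hΔ]
  have h1 : gaussianPDF 0 Δ = fun x => ((gaussianPDFReal 0 Δ x).toNNReal : ℝ≥0∞) := rfl
  rw [h1, integrable_withDensity_iff_integrable_smul
    ((measurable_gaussianPDFReal 0 Δ).real_toNNReal)]
  refine integrable_congr (Filter.Eventually.of_forall fun x => ?_)
  simp [NNReal.smul_def, Real.coe_toNNReal _ (gaussianPDFReal_nonneg 0 Δ x)]

lemma aux_key_A {Δ : ℝ≥0} (hΔ : 0 < Δ) (s x : ℝ) : gaussianPDFReal 0 Δ x * rexp (s * x)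
    = ((Real.sqrt (2 * π * Δ))⁻¹ * rexp ((Δ:ℝ) * s^2 / 2)) *
      rexp (-(2*(Δ:ℝ))⁻¹ * (x - s*Δ)^2) := by
  have hΔ0 : (Δ:ℝ) ≠ 0 := NNReal.coe_ne_zero.mpr hΔ.ne'
  simp only [gaussianPDFReal, sub_zero, mul_assoc, ← Real.exp_add]
  congr 1
  field_simp
  ring

lemma gauss_integrable_exp_mul {Δ : ℝ≥0} (hΔ : 0 < Δ) (s : ℝ) :
    Integrable (fun y => rexp (s * y)) (gaussianReal 0 Δ) := by
  rw [aux_integrable_gaussianReal_iff hΔ.ne']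
  have hΔ' : (0:ℝ) < (Δ:ℝ) := hΔ
  have hb : (0:ℝ) < (2 * (Δ:ℝ))⁻¹ := by positivity
  simp only [aux_key_A hΔ s]
  exact (((integrable_exp_neg_mul_sq hb).comp_sub_right (s*Δ))).const_mul _

lemma gauss_integral_exp_mul {Δ : ℝ≥0} (hΔ : 0 < Δ) (s : ℝ) :
    ∫ y, rexp (s * y) ∂(gaussianReal 0 Δ) = rexp ((Δ:ℝ) * s^2 / 2) := by
  have hΔ' : (0:ℝ) < (Δ:ℝ) := hΔ
  have hb : (0:ℝ) < (2 * (Δ:ℝ))⁻¹ := by positivity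
  rw [aux_integral_gaussianReal hΔ.ne']
  simp only [aux_key_A hΔ s]
  rw [MeasureTheory.integral_const_mul]
  have h2 : ∫ x : ℝ, rexp (-(2*(Δ:ℝ))⁻¹ * (x - s*Δ)^2)
      = ∫ x : ℝ, rexp (-(2*(Δ:ℝ))⁻¹ * x^2) :=
    integral_sub_right_eq_self (fun a => rexp (-(2*(Δ:ℝ))⁻¹ * a^2)) (s*Δ)
  rw [h2, integral_gaussian]
  have h3 : π / (2*(Δ:ℝ))⁻¹ = 2 * π * Δ := by
    field_simp
  rw [h3]
  have h4 : Real.sqrt (2 * π * Δ) ≠ 0 := (Real.sqrt_pos.mpr (by positivity)).ne'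
  field_simp

lemma aux_key_B {Δ : ℝ≥0} (hΔ : 0 < Δ) (c x : ℝ) : gaussianPDFReal 0 Δ x * rexp (c * x^2)
    = (Real.sqrt (2 * π * Δ))⁻¹ * rexp (-((1 - 2*c*(Δ:ℝ))/(2*(Δ:ℝ))) * x^2) := by
  have hΔ0 : (Δ:ℝ) ≠ 0 := NNReal.coe_ne_zero.mpr hΔ.ne'
  simp only [gaussianPDFReal, sub_zero, mul_assoc, ← Real.exp_add]
  congr 1
  field_simp
  ring

lemma gauss_integrable_exp_sq {Δ : ℝ≥0} (hΔ : 0 < Δ) {c : ℝ} (hc : 2*c*(Δ:ℝ) < 1) :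
    Integrable (fun x => rexp (c * x^2)) (gaussianReal 0 Δ) := by
  have hΔ' : (0:ℝ) < (Δ:ℝ) := hΔ
  rw [aux_integrable_gaussianReal_iff hΔ.ne']
  have hb : (0:ℝ) < (1 - 2*c*(Δ:ℝ))/(2*(Δ:ℝ)) := div_pos (by linarith) (by positivity)
  simp only [aux_key_B hΔ]
  exact (integrable_exp_neg_mul_sq hb).const_mul _

lemma gauss_integral_exp_sq {Δ : ℝ≥0} (hΔ : 0 < Δ) {c : ℝ} (hc : 2*c*(Δ:ℝ) < 1) :
    ∫ x, rexp (c * x^2) ∂(gaussianReal 0 Δ) = 1 / Real.sqrt (1 - 2*c*(Δ:ℝ)) := by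
  have hΔ' : (0:ℝ) < (Δ:ℝ) := hΔ
  have hb : (0:ℝ) < (1 - 2*c*(Δ:ℝ))/(2*(Δ:ℝ)) := div_pos (by linarith) (by positivity)
  rw [aux_integral_gaussianReal hΔ.ne']
  simp only [aux_key_B hΔ]
  rw [MeasureTheory.integral_const_mul, integral_gaussian]
  have h3 : π / ((1 - 2*c*(Δ:ℝ))/(2*(Δ:ℝ))) = (2 * π * Δ) / (1 - 2*c*(Δ:ℝ)) := by
    have hΔ0 : (Δ:ℝ) ≠ 0 := NNReal.coe_ne_zero.mpr hΔ.ne'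
    field_simp
  have h2pΔ : (0:ℝ) ≤ 2 * π * Δ := by positivity
  have h4 : Real.sqrt (2 * π * Δ) ≠ 0 := (Real.sqrt_pos.mpr (by positivity)).ne'
  rw [h3, Real.sqrt_div h2pΔ]
  field_simp

lemma product_exp_integral {Ω : Type*} [MeasurableSpace Ω] (P : Measure Ω)
    [IsProbabilityMeasure P] {Δ : ℝ≥0} (hΔ : 0 < Δ) {X Y : Ω → ℝ}
    (hXm : Measurable X) (hYm : Measurable Y) (hind : IndepFun X Y P)
    (hX : P.map X = gaussianReal 0 Δ) (hY : P.map Y = gaussianReal 0 Δ)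
    {t : ℝ} (ht : t^2 * (Δ:ℝ)^2 < 1) :
    Integrable (fun ω => rexp (t * (X ω * Y ω))) P ∧
      ∫ ω, rexp (t * (X ω * Y ω)) ∂P = 1 / Real.sqrt (1 - t^2 * (Δ:ℝ)^2) := by
  set γ := gaussianReal 0 Δ with hγ
  have hpair : Measurable fun ω => (X ω, Y ω) := hXm.prodMk hYm
  have hmap : P.map (fun ω => (X ω, Y ω)) = γ.prod γ := by
    rw [show γ.prod γ = (P.map X).prod (P.map Y) by rw [hX, hY]]
    exact (indepFun_iff_map_prod_eq_prod_map_map hXm.aemeasurable hYm.aemeasurable).mp hind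
  set F : ℝ × ℝ → ℝ := fun p => rexp (t * (p.1 * p.2)) with hF
  have hFc : Continuous F := by fun_prop
  have hcc : 2 * ((Δ:ℝ) * t^2 / 2) * (Δ:ℝ) < 1 := by
    have : 2 * ((Δ:ℝ) * t^2 / 2) * (Δ:ℝ) = t^2 * (Δ:ℝ)^2 := by ring
    rw [this]; exact ht
  have hinner : ∀ x : ℝ, ∫ y, ‖F (x, y)‖ ∂γ = rexp (((Δ:ℝ) * t^2 / 2) * x^2) := by
    intro x
    have h1 : ∀ y : ℝ, ‖F (x, y)‖ = rexp ((t * x) * y) := fun y => by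
      simp only [hF, Real.norm_eq_abs, Real.abs_exp]
      ring_nf
    simp only [h1]
    rw [gauss_integral_exp_mul hΔ (t*x)]
    congr 1
    ring
  have hFint : Integrable F (γ.prod γ) := by
    rw [integrable_prod_iff hFc.aestronglyMeasurable]
    constructor
    · refine Filter.Eventually.of_forall fun x => ?_
      have h1 : (fun y => F (x, y)) = fun y => rexp ((t * x) * y) := by
        funext y; simp only [hF]; ring_nf
      rw [h1]
      exact gauss_integrable_exp_mul hΔ (t*x)
    · have h2 : (fun x => ∫ y, ‖F (x, y)‖ ∂γ)
          = fun x => rexp (((Δ:ℝ) * t^2 / 2) * x^2) := funext hinner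
      rw [h2]
      exact gauss_integrable_exp_sq hΔ hcc
  have hint : Integrable (fun ω => rexp (t * (X ω * Y ω))) P := by
    have h1 : Integrable F (P.map (fun ω => (X ω, Y ω))) := by rw [hmap]; exact hFint
    exact (integrable_map_measure hFc.aestronglyMeasurable hpair.aemeasurable).mp h1
  refine ⟨hint, ?_⟩
  have hval : 2 * ((Δ:ℝ) * t^2/2) * (Δ:ℝ) = t^2 * (Δ:ℝ)^2 := by ring
  calc ∫ ω, rexp (t * (X ω * Y ω)) ∂P = ∫ p, F p ∂(P.map (fun ω => (X ω, Y ω))) := by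
        rw [integral_map hpair.aemeasurable hFc.aestronglyMeasurable]
    _ = ∫ p, F p ∂(γ.prod γ) := by rw [hmap]
    _ = ∫ x, ∫ y, F (x, y) ∂γ ∂γ := integral_prod F hFint
    _ = ∫ x, rexp (((Δ:ℝ) * t^2 / 2) * x^2) ∂γ := by
        refine integral_congr_ae (Filter.Eventually.of_forall fun x => ?_)
        show ∫ y, F (x, y) ∂γ = rexp (((Δ:ℝ) * t^2 / 2) * x^2)
        have h1 : (fun y => F (x, y)) = fun y => rexp ((t * x) * y) := by
          funext y; simp only [hF]; ring_nf
        rw [h1, gauss_integral_exp_mul hΔ (t*x)]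
        congr 1; ring
    _ = 1 / Real.sqrt (1 - 2 * ((Δ:ℝ) * t^2/2) * (Δ:ℝ)) := gauss_integral_exp_sq hΔ hcc
    _ = 1 / Real.sqrt (1 - t^2 * (Δ:ℝ)^2) := by rw [hval]

lemma aux_iIndepFun_congr {ι Ω : Type*} {mΩ : MeasurableSpace Ω} {P : Measure Ω}
    {β : ι → Type*} [m : ∀ i, MeasurableSpace (β i)] {f g : ∀ i, Ω → β i}
    (h : iIndepFun f P) (hfg : ∀ i, f i =ᵐ[P] g i) : iIndepFun g P := by
  rw [iIndepFun_iff_measure_inter_preimage_eq_mul] at h ⊢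
  intro S sets hmeas
  have hae : ∀ᵐ ω ∂P, ∀ i ∈ S, f i ω = g i ω :=
    (MeasureTheory.ae_ball_iff S.countable_toSet).mpr fun i _ => hfg i
  have h1 : ∀ i ∈ S, P (g i ⁻¹' sets i) = P (f i ⁻¹' sets i) := by
    intro i hi
    refine measure_congr ?_
    filter_upwards [hfg i] with ω hω
    show (g i ω ∈ sets i) = (f i ω ∈ sets i)
    rw [hω]
  have h2 : P (⋂ i ∈ S, g i ⁻¹' sets i) = P (⋂ i ∈ S, f i ⁻¹' sets i) := by
    refine measure_congr ?_
    filter_upwards [hae] with ω hω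
    have hiff : ∀ i ∈ S, (g i ω ∈ sets i ↔ f i ω ∈ sets i) := fun i hi => by rw [hω i hi]
    show (ω ∈ ⋂ i ∈ S, g i ⁻¹' sets i) = (ω ∈ ⋂ i ∈ S, f i ⁻¹' sets i)
    simp only [Set.mem_iInter, Set.mem_preimage, eq_iff_iff]
    exact ⟨fun hmem i hi => (hiff i hi).mp (hmem i hi),
      fun hmem i hi => (hiff i hi).mpr (hmem i hi)⟩
  rw [h2, h S hmeas]
  exact Finset.prod_congr rfl fun i hi => (h1 i hi).symm

lemma aux_indep_mul_sum {Ω : Type*} [MeasurableSpace Ω] {P : Measure Ω} {q : ℕ}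
    {F : Fin q ⊕ Fin q → Ω → ℝ} (hI : iIndepFun F P)
    (hm : ∀ k, Measurable (F k)) (s : Finset (Fin q)) (i : Fin q) (hi : i ∉ s) :
    IndepFun (fun ω => F (.inl i) ω * F (.inr i) ω)
      (fun ω => ∑ j ∈ s, F (.inl j) ω * F (.inr j) ω) P := by
  classical
  set S : Finset (Fin q ⊕ Fin q) := {Sum.inl i, Sum.inr i} with hS
  set T : Finset (Fin q ⊕ Fin q) := s.image Sum.inl ∪ s.image Sum.inr with hT
  have hST : Disjoint S T := by
    rw [Finset.disjoint_left]
    intro k hk hk'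
    simp only [hS, Finset.mem_insert, Finset.mem_singleton] at hk
    simp only [hT, Finset.mem_union, Finset.mem_image] at hk'
    rcases hk with rfl | rfl <;>
      rcases hk' with ⟨j, hj, hjk⟩ | ⟨j, hj, hjk⟩ <;>
      first
        | (cases hjk; exact hi hj)
        | (exact absurd hjk (by simp))
  have hbase := hI.indepFun_finset S T hST hm
  have hiS1 : (Sum.inl i : Fin q ⊕ Fin q) ∈ S := by simp [hS]
  have hiS2 : (Sum.inr i : Fin q ⊕ Fin q) ∈ S := by simp [hS]
  let φ : (∀ _ : S, ℝ) → ℝ := fun v => v ⟨Sum.inl i, hiS1⟩ * v ⟨Sum.inr i, hiS2⟩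
  let ψ : (∀ _ : T, ℝ) → ℝ := fun v => ∑ j ∈ s.attach,
    v ⟨Sum.inl j.1, by simp [hT, j.2]⟩ * v ⟨Sum.inr j.1, by simp [hT, j.2]⟩
  have hφ : Measurable φ := (measurable_pi_apply _).mul (measurable_pi_apply _)
  have hψ : Measurable ψ :=
    Finset.measurable_sum _ fun j _ => (measurable_pi_apply _).mul (measurable_pi_apply _)
  have hcomp := hbase.comp hφ hψ
  have e1 : (φ ∘ fun a (k : S) => F k a) = fun ω => F (.inl i) ω * F (.inr i) ω := rfl
  have e2 : (ψ ∘ fun a (k : T) => F k a)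
      = fun ω => ∑ j ∈ s, F (.inl j) ω * F (.inr j) ω := by
    funext ω
    show ∑ j ∈ s.attach, F (Sum.inl j.1) ω * F (Sum.inr j.1) ω = _
    rw [← Finset.sum_attach s (fun j => F (Sum.inl j) ω * F (Sum.inr j) ω)]
  rw [e1, e2] at hcomp
  exact hcomp

/-- **Lemma (Chernoff bound for a sum of products of independent Gaussians).**
Fix `α ∈ (1/3,1/2)`, `β ∈ (1−α,2α)`, `Δ > 0` and `q ≥ 1`. If `X₁,…,X_q, Y₁,…,Y_q` are
mutually independent `N(0,Δ)` random variables and `S = Σ_r X_r Y_r`, then for every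
`θ' ∈ (0,1/4)`, `P(S > q^β Δ^{2α}) ≤ exp(−θ' q^{β−1/2} Δ^{2α−1} + 1)`. -/
theorem chernoff_product_gaussians
    (α β : ℝ) (hα1 : 1 / 3 < α) (hα2 : α < 1 / 2)
    (hβ1 : 1 - α < β) (hβ2 : β < 2 * α)
    (Δ : ℝ≥0) (hΔ : 0 < Δ) (q : ℕ) (hq : 1 ≤ q)
    {Ω : Type*} [MeasurableSpace Ω] (P : Measure Ω) [IsProbabilityMeasure P]
    (X Y : Fin q → Ω → ℝ)
    (hIndep : iIndepFun (Sum.elim X Y) P)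
    (hX : ∀ r, P.map (X r) = gaussianReal 0 Δ)
    (hY : ∀ r, P.map (Y r) = gaussianReal 0 Δ)
    (θ' : ℝ) (hθ1 : 0 < θ') (hθ2 : θ' < 1 / 4) :
    P {ω | (q : ℝ) ^ β * (Δ : ℝ) ^ (2 * α) < ∑ r, X r ω * Y r ω} ≤
      ENNReal.ofReal
        (Real.exp (-θ' * (q : ℝ) ^ (β - 1 / 2) * (Δ : ℝ) ^ (2 * α - 1) + 1)) := by
  classical
  have hΔR : (0:ℝ) < (Δ:ℝ) := hΔ
  have hq0 : (0:ℝ) < (q:ℝ) := by exact_mod_cast Nat.lt_of_lt_of_le Nat.zero_lt_one hq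
  have hq1 : (1:ℝ) ≤ (q:ℝ) := by exact_mod_cast hq
  -- measurable modifications
  have hXae : ∀ r, AEMeasurable (X r) P := fun r => aux_aemeasurable_of_map_gaussian (hX r)
  have hYae : ∀ r, AEMeasurable (Y r) P := fun r => aux_aemeasurable_of_map_gaussian (hY r)
  set X' : Fin q → Ω → ℝ := fun r => (hXae r).mk (X r) with hX'def
  set Y' : Fin q → Ω → ℝ := fun r => (hYae r).mk (Y r) with hY'def
  have hX'm : ∀ r, Measurable (X' r) := fun r => (hXae r).measurable_mk
  have hY'm : ∀ r, Measurable (Y' r) := fun r => (hYae r).measurable_mk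
  have hX'ae : ∀ r, X r =ᵐ[P] X' r := fun r => (hXae r).ae_eq_mk
  have hY'ae : ∀ r, Y r =ᵐ[P] Y' r := fun r => (hYae r).ae_eq_mk
  set F : Fin q ⊕ Fin q → Ω → ℝ := Sum.elim X' Y' with hFdef
  have hFm : ∀ k, Measurable (F k) := fun k => by
    cases k with
    | inl r => exact hX'm r
    | inr r => exact hY'm r
  have hIndep' : iIndepFun F P := by
    refine aux_iIndepFun_congr hIndep fun k => ?_
    cases k with
    | inl r => exact hX'ae r
    | inr r => exact hY'ae r
  have hX'law : ∀ r, P.map (X' r) = gaussianReal 0 Δ := fun r => by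
    rw [← Measure.map_congr (hX'ae r)]; exact hX r
  have hY'law : ∀ r, P.map (Y' r) = gaussianReal 0 Δ := fun r => by
    rw [← Measure.map_congr (hY'ae r)]; exact hY r
  have hpairind : ∀ r : Fin q, IndepFun (X' r) (Y' r) P := fun r =>
    hIndep'.indepFun (show (Sum.inl r : Fin q ⊕ Fin q) ≠ Sum.inr r by simp)
  -- parameters
  set t : ℝ := θ' * (q:ℝ) ^ (-(1/2) : ℝ) * (Δ:ℝ) ^ (-1 : ℝ) with htdef
  have ht0 : 0 < t := by
    apply mul_pos (mul_pos hθ1 (Real.rpow_pos_of_pos hq0 _)) (Real.rpow_pos_of_pos hΔR _)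
  have hx_eq : t^2 * (Δ:ℝ)^2 = θ'^2 / (q:ℝ) := by
    rw [htdef, Real.rpow_neg_one]
    have h1 : ((q:ℝ) ^ (-(1/2):ℝ))^2 = (q:ℝ)⁻¹ := by
      rw [← Real.rpow_natCast ((q:ℝ) ^ (-(1/2):ℝ)) 2, ← Real.rpow_mul hq0.le]
      norm_num
      exact Real.rpow_neg_one (q:ℝ)
    have h2 : (θ' * (q:ℝ)^(-(1/2):ℝ) * (Δ:ℝ)⁻¹)^2 * (Δ:ℝ)^2
        = θ'^2 * ((q:ℝ)^(-(1/2):ℝ))^2 * (((Δ:ℝ)⁻¹)^2 * (Δ:ℝ)^2) := by ring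
    rw [h2, h1]
    have h3 : ((Δ:ℝ)⁻¹)^2 * (Δ:ℝ)^2 = 1 := by
      rw [← mul_pow]
      rw [inv_mul_cancel₀ hΔR.ne']
      norm_num
    rw [h3]
    ring
  have hθsq : θ'^2 < 1/16 := by nlinarith
  have hxlt : t^2*(Δ:ℝ)^2 < 1 := by
    rw [hx_eq]
    have h1 : θ'^2 / (q:ℝ) ≤ θ'^2 := div_le_self (sq_nonneg _) hq1
    nlinarith
  -- per-factor facts
  have hfac : ∀ r : Fin q, Integrable (fun ω => rexp (t * (X' r ω * Y' r ω))) P ∧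
      ∫ ω, rexp (t * (X' r ω * Y' r ω)) ∂P = 1 / Real.sqrt (1 - t^2*(Δ:ℝ)^2) :=
    fun r => product_exp_integral P hΔ (hX'm r) (hY'm r) (hpairind r)
      (hX'law r) (hY'law r) hxlt
  set Z : Fin q → Ω → ℝ := fun r ω => X' r ω * Y' r ω with hZdef
  have hZm : ∀ r, Measurable (Z r) := fun r => (hX'm r).mul (hY'm r)
  have hmgfZ : ∀ r, mgf (Z r) P t = 1 / Real.sqrt (1 - t^2*(Δ:ℝ)^2) := fun r => (hfac r).2
  have hintZ : ∀ r, Integrable (fun ω => rexp (t * Z r ω)) P := fun r => (hfac r).1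
  -- induction for sums
  have main : ∀ s : Finset (Fin q),
      Integrable (fun ω => rexp (t * (∑ j ∈ s, Z j) ω)) P ∧
      mgf (∑ j ∈ s, Z j) P t = ∏ j ∈ s, mgf (Z j) P t := by
    intro s
    induction s using Finset.induction_on with
    | empty =>
      constructor
      · simp only [Finset.sum_empty, Pi.zero_apply, mul_zero, Real.exp_zero]
        exact integrable_const 1
      · simp [mgf_zero_fun]
    | @insert i s hi ih =>
      have hind0 := aux_indep_mul_sum hIndep' hFm s i hi
      have hind : IndepFun (Z i) (∑ j ∈ s, Z j) P := by
        have e : (fun ω => ∑ j ∈ s, F (Sum.inl j) ω * F (Sum.inr j) ω) = (∑ j ∈ s, Z j) := by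
          funext ω; rw [Finset.sum_apply]; rfl
        have e2 : (fun ω => F (Sum.inl i) ω * F (Sum.inr i) ω) = Z i := rfl
        rw [e, e2] at hind0
        exact hind0
      have hsm1 : AEStronglyMeasurable (fun ω => rexp (t * Z i ω)) P :=
        (((hZm i).const_mul t).exp).aestronglyMeasurable
      have hsmsum : Measurable (∑ j ∈ s, Z j) := by
        have : (∑ j ∈ s, Z j) = fun ω => ∑ j ∈ s, Z j ω := by
          funext ω; rw [Finset.sum_apply]
        rw [this]
        exact Finset.measurable_sum s fun j _ => hZm j
      have hsm2 : AEStronglyMeasurable (fun ω => rexp (t * (∑ j ∈ s, Z j) ω)) P :=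
        ((hsmsum.const_mul t).exp).aestronglyMeasurable
      constructor
      · rw [Finset.sum_insert hi]
        exact hind.integrable_exp_mul_add (hintZ i) ih.1
      · rw [Finset.sum_insert hi, hind.mgf_add hsm1 hsm2, ih.2, Finset.prod_insert hi]
  -- Chernoff
  set a : ℝ := (q:ℝ)^β * (Δ:ℝ)^(2*α) with hadef
  have markov := measure_ge_le_exp_mul_mgf (μ := P) (X := ∑ r, Z r) (t := t) a ht0.le
    (main Finset.univ).1
  have hmgfsum : mgf (∑ r, Z r) P t = (1 / Real.sqrt (1 - t^2*(Δ:ℝ)^2))^q := by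
    rw [(main Finset.univ).2]
    simp only [hmgfZ]
    rw [Finset.prod_const, Finset.card_univ, Fintype.card_fin]
  -- reduce to the primed set
  have hset : P {ω | a < ∑ r, X r ω * Y r ω} = P {ω | a < ∑ r, X' r ω * Y' r ω} := by
    refine measure_congr ?_
    have hae : ∀ᵐ ω ∂P, (∀ r, X r ω = X' r ω) ∧ (∀ r, Y r ω = Y' r ω) :=
      ((MeasureTheory.ae_all_iff.mpr hX'ae).and (MeasureTheory.ae_all_iff.mpr hY'ae))
    filter_upwards [hae] with ω hω
    show (a < ∑ r, X r ω * Y r ω) = (a < ∑ r, X' r ω * Y' r ω)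
    congr 1
    exact Finset.sum_congr rfl fun r _ => by rw [hω.1 r, hω.2 r]
  rw [hset]
  have hsub : {ω | a < ∑ r, X' r ω * Y' r ω} ⊆ {ω | a ≤ (∑ r, Z r) ω} := by
    intro ω hω
    simp only [Set.mem_setOf_eq, Finset.sum_apply] at *
    exact le_of_lt hω
  refine le_trans (measure_mono hsub) ?_
  rw [← ENNReal.ofReal_toReal (measure_ne_top P {ω | a ≤ (∑ r, Z r) ω})]
  refine ENNReal.ofReal_le_ofReal (le_trans markov ?_)
  rw [hmgfsum]
  -- numeric endgame
  set x : ℝ := t^2*(Δ:ℝ)^2 with hxdef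
  have hx0 : 0 < x := by
    rw [hxdef]; positivity
  have h1x : 0 < 1 - x := by linarith [hxlt]
  have hxle : x ≤ 1/(q:ℝ) := by
    rw [hx_eq]
    gcongr
    nlinarith
  have hlog : -Real.log (1-x) ≤ 2/(q:ℝ) := by
    have h2 := Real.log_le_sub_one_of_pos (inv_pos.mpr h1x)
    rw [Real.log_inv] at h2
    have h3 : (1-x)⁻¹ - 1 = x/(1-x) := by field_simp; ring
    rw [h3] at h2
    have hx16 : x < 1/16 := by
      rw [hx_eq]
      calc θ'^2 / (q:ℝ) ≤ θ'^2 := div_le_self (sq_nonneg _) hq1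
        _ < 1/16 := hθsq
    have h2q : 2*(1/(q:ℝ)) = 2/(q:ℝ) := by ring
    have h4 : 2*x ≤ 2/(q:ℝ) := by linarith
    refine le_trans h2 (le_trans ?_ h4)
    rw [div_le_iff₀ h1x]
    have h5 := mul_nonneg hx0.le (show (0:ℝ) ≤ 1 - 2*x by linarith)
    nlinarith [h5]
  have hexp2 : rexp (-2/(q:ℝ)) ≤ 1 - x := by
    rw [← Real.exp_log h1x]
    apply Real.exp_le_exp.mpr
    have : -2/(q:ℝ) = -(2/(q:ℝ)) := by ring
    rw [this]
    linarith
  have hsqrt : rexp (-(1:ℝ)/(q:ℝ)) ≤ Real.sqrt (1-x) := by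
    rw [Real.le_sqrt (Real.exp_pos _).le h1x.le]
    have : rexp (-(1:ℝ)/(q:ℝ))^2 = rexp (-2/(q:ℝ)) := by
      rw [sq, ← Real.exp_add]
      congr 1
      ring
    rw [this]
    exact hexp2
  have hinv : 1 / Real.sqrt (1-x) ≤ rexp (1/(q:ℝ)) := by
    have hs : 0 < Real.sqrt (1-x) := Real.sqrt_pos.mpr h1x
    rw [div_le_iff₀ hs]
    have he : rexp (1/(q:ℝ)) * rexp (-(1:ℝ)/(q:ℝ)) = 1 := by
      rw [← Real.exp_add, show 1/(q:ℝ) + -(1:ℝ)/(q:ℝ) = 0 by ring, Real.exp_zero]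
    calc (1:ℝ) = rexp (1/(q:ℝ)) * rexp (-(1:ℝ)/(q:ℝ)) := he.symm
      _ ≤ rexp (1/(q:ℝ)) * Real.sqrt (1-x) := by gcongr
  have hpow : (1 / Real.sqrt (1-x))^q ≤ rexp 1 := by
    calc (1 / Real.sqrt (1-x))^q ≤ (rexp (1/(q:ℝ)))^q := by
          gcongr
      _ = rexp ((q:ℝ) * (1/(q:ℝ))) := by rw [Real.exp_nat_mul]
      _ = rexp 1 := by rw [mul_one_div_cancel hq0.ne']
  have hta : t * a = θ' * (q:ℝ)^(β - 1/2) * (Δ:ℝ)^(2*α - 1) := by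
    rw [htdef, hadef]
    rw [show β - 1/2 = β + (-(1/2)) by ring, Real.rpow_add hq0,
      show 2*α - 1 = 2*α + (-1 : ℝ) by ring, Real.rpow_add hΔR]
    ring
  calc rexp (-t*a) * (1 / Real.sqrt (1-x))^q ≤ rexp (-t*a) * rexp 1 := by
        gcongr
    _ = rexp (-t*a + 1) := by rw [← Real.exp_add]
    _ = rexp (-θ' * (q:ℝ)^(β - 1/2) * (Δ:ℝ)^(2*α - 1) + 1) := by
        congr 1
        have : -t*a = -(t*a) := by ring
        rw [this, hta]
        ring
end

section
/- Let Y and Z be independent standard normal random variables and let a₁, a₂, b, c₁, c₂ ∈ ℝ satisfy 2c₁ < 1, 2c₂ < 1 and b² < (1−2c₁)(1−2c₂). Then E[exp(a₁Y + a₂Z + bYZ + c₁Y² + c₂Z²)] = (1−2c₁)^{−1/2}(1−2c₂)^{−1/2}·(1 − b²(1−2c₁)^{−1}(1−2c₂)^{−1})^{−1/2} · exp( [a₁²(1−2c₁)^{−1} + a₂²(1−2c₂)^{−1} + 2a₁a₂b(1−2c₁)^{−1}(1−2c₂)^{−1}] / [2(1 − b²(1−2c₁)^{−1}(1−2c₂)^{−1})]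 ). -/
open MeasureTheory ProbabilityTheory

lemma cexp_ofReal_arg (b c d x : ℝ) :
    Complex.exp ((b : ℂ) * (x : ℂ) ^ 2 + (c : ℂ) * (x : ℂ) + (d : ℂ)) =
      ((Real.exp (b * x ^ 2 + c * x + d) : ℝ) : ℂ) := by
  rw [show ((b:ℂ) * (x:ℂ) ^ 2 + (c:ℂ) * (x:ℂ) + (d:ℂ)) = ((b * x ^ 2 + c * x + d : ℝ) : ℂ) by
    push_cast; ring, Complex.ofReal_exp]

lemma integrable_rexp_quadratic {b : ℝ} (hb : b < 0) (c d : ℝ) :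
    Integrable (fun x : ℝ => Real.exp (b * x ^ 2 + c * x + d)) := by
  have h := (integrable_cexp_quadratic' (b := (b : ℂ)) (by simpa using hb) (c : ℂ) (d : ℂ)).re
  refine h.congr (Filter.Eventually.of_forall fun x => ?_)
  simp only [cexp_ofReal_arg, RCLike.re_to_complex, Complex.ofReal_re]

lemma integral_rexp_quadratic {b : ℝ} (hb : b < 0) (c d : ℝ) :
    ∫ x : ℝ, Real.exp (b * x ^ 2 + c * x + d) =
      (Real.pi / -b) ^ ((1:ℝ)/2) * Real.exp (d - c ^ 2 / (4 * b)) := by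
  have h := integral_cexp_quadratic (b := (b : ℂ)) (by simpa using hb) (c : ℂ) (d : ℂ)
  have h1 : ∫ x : ℝ, Complex.exp ((b : ℂ) * (x:ℂ) ^ 2 + (c:ℂ) * (x:ℂ) + (d:ℂ)) =
      ((∫ x : ℝ, Real.exp (b * x ^ 2 + c * x + d) : ℝ) : ℂ) := by
    simp_rw [cexp_ofReal_arg]
    exact integral_ofReal
  have h2 : ((Real.pi : ℂ) / -(b:ℂ)) ^ (1/2 : ℂ) * Complex.exp ((d:ℂ) - (c:ℂ)^2 / (4 * (b:ℂ))) =
      (((Real.pi / -b) ^ ((1:ℝ)/2) * Real.exp (d - c ^ 2 / (4 * b)) : ℝ) : ℂ) := by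
    rw [Complex.ofReal_mul,
      show ((d:ℂ) - (c:ℂ)^2/(4*(b:ℂ))) = ((d - c^2/(4*b) : ℝ):ℂ) by push_cast; ring,
      Complex.ofReal_exp,
      show ((Real.pi:ℂ) / -(b:ℂ)) = (((Real.pi) / (-b) : ℝ):ℂ) by push_cast; ring]
    congr 1
    rw [Complex.ofReal_cpow (div_nonneg Real.pi_pos.le (by linarith : (0:ℝ) ≤ -b))]
    norm_num
  rw [h1, h2] at h
  exact_mod_cast h

lemma gauss_smul_eq (c α x : ℝ) :
    (gaussianPDFReal 0 1 x).toNNReal • Real.exp (α * x + c * x ^ 2) =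
      (Real.sqrt (2 * Real.pi))⁻¹ * Real.exp ((c - 1/2) * x ^ 2 + α * x + 0) := by
  rw [NNReal.smul_def, Real.coe_toNNReal _ (gaussianPDFReal_nonneg 0 1 x), smul_eq_mul]
  simp only [gaussianPDFReal, NNReal.coe_one, mul_one, sub_zero]
  rw [mul_assoc, ← Real.exp_add]
  congr 2
  ring

lemma hmeas_pdf : Measurable (fun x : ℝ => (gaussianPDFReal 0 1 x).toNNReal) :=
  (measurable_gaussianPDFReal 0 1).real_toNNReal

lemma gaussianPDF_eq_coe : gaussianPDF 0 1 = fun x => ((gaussianPDFReal 0 1 x).toNNReal : ENNReal) :=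
  rfl

lemma integrable_gauss_quad {c : ℝ} (hc : 2 * c < 1) (α : ℝ) :
    Integrable (fun x => Real.exp (α * x + c * x ^ 2)) (gaussianReal 0 1) := by
  have hbneg : c - 1/2 < (0:ℝ) := by linarith
  rw [gaussianReal_of_var_ne_zero 0 one_ne_zero, gaussianPDF_eq_coe,
    integrable_withDensity_iff_integrable_smul hmeas_pdf]
  exact ((integrable_rexp_quadratic hbneg α 0).const_mul _).congr
    (Filter.Eventually.of_forall fun x => (gauss_smul_eq c α x).symm)

lemma integral_gauss_quad {c : ℝ} (hc : 2 * c < 1) (α : ℝ) :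
    ∫ x, Real.exp (α * x + c * x ^ 2) ∂(gaussianReal 0 1) =
      (1 - 2 * c) ^ (-(1:ℝ)/2) * Real.exp (α ^ 2 / (2 * (1 - 2 * c))) := by
  have hu : (0:ℝ) < 1 - 2 * c := by linarith
  have hu' : (1:ℝ) - 2 * c ≠ 0 := hu.ne'
  have hbneg : c - 1/2 < (0:ℝ) := by linarith
  have hb' : c - 1/2 ≠ (0:ℝ) := hbneg.ne
  rw [gaussianReal_of_var_ne_zero 0 one_ne_zero, gaussianPDF_eq_coe,
    integral_withDensity_eq_integral_smul hmeas_pdf]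
  simp_rw [gauss_smul_eq c α]
  rw [MeasureTheory.integral_const_mul, integral_rexp_quadratic hbneg α 0]
  rw [show (0:ℝ) - α^2/(4*(c-1/2)) = α^2/(2*(1-2*c)) by
    rw [zero_sub, ← div_neg, show -(4*(c-1/2)) = 2*(1-2*c) by ring]]
  rw [show Real.pi / -(c-1/2) = (2*Real.pi)/(1-2*c) by
    rw [div_eq_div_iff (by linarith) (by linarith)]; ring]
  rw [← mul_assoc]
  congr 1
  rw [Real.sqrt_eq_rpow, Real.div_rpow (by positivity : (0:ℝ) ≤ 2*Real.pi) hu.le,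
    show (-(1:ℝ)/2) = -((1:ℝ)/2) by ring, Real.rpow_neg hu.le]
  have h2 : (2*Real.pi) ^ ((1:ℝ)/2) ≠ 0 := by positivity
  field_simp

lemma lintegral_gauss_quad {c : ℝ} (hc : 2 * c < 1) (α : ℝ) :
    ∫⁻ x, ENNReal.ofReal (Real.exp (α * x + c * x ^ 2)) ∂(gaussianReal 0 1) =
      ENNReal.ofReal ((1 - 2 * c) ^ (-(1:ℝ)/2) * Real.exp (α ^ 2 / (2 * (1 - 2 * c)))) := by
  rw [← ofReal_integral_eq_lintegral_ofReal (integrable_gauss_quad hc α)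
    (Filter.Eventually.of_forall fun x => (Real.exp_pos _).le), integral_gauss_quad hc α]

set_option maxHeartbeats 1000000 in
/-- **Lemma (MGF of a quadratic form of two independent standard Gaussians).**
Let `Y, Z` be independent standard normal random variables and `a₁, a₂, b, c₁, c₂ ∈ ℝ`
with `2c₁ < 1`, `2c₂ < 1` and `b² < (1−2c₁)(1−2c₂)`. Then
`E[exp(a₁Y + a₂Z + bYZ + c₁Y² + c₂Z²)]` equals the stated closed form. -/
theorem gaussian_quadratic_mgf
    {Ω : Type*} [MeasurableSpace Ω] (P : Measure Ω) [IsProbabilityMeasure P]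
    (Y Z : Ω → ℝ)
    (hIndep : IndepFun Y Z P)
    (hY : P.map Y = gaussianReal 0 1)
    (hZ : P.map Z = gaussianReal 0 1)
    (a₁ a₂ b c₁ c₂ : ℝ)
    (hc₁ : 2 * c₁ < 1) (hc₂ : 2 * c₂ < 1)
    (hb : b ^ 2 < (1 - 2 * c₁) * (1 - 2 * c₂)) :
    ∫ ω, Real.exp (a₁ * Y ω + a₂ * Z ω + b * Y ω * Z ω +
        c₁ * Y ω ^ 2 + c₂ * Z ω ^ 2) ∂P =
      (1 - 2 * c₁) ^ (-(1 : ℝ) / 2) * (1 - 2 * c₂) ^ (-(1 : ℝ) / 2) *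
        (1 - b ^ 2 * (1 - 2 * c₁)⁻¹ * (1 - 2 * c₂)⁻¹) ^ (-(1 : ℝ) / 2) *
        Real.exp
          ((a₁ ^ 2 * (1 - 2 * c₁)⁻¹ + a₂ ^ 2 * (1 - 2 * c₂)⁻¹ +
              2 * a₁ * a₂ * b * (1 - 2 * c₁)⁻¹ * (1 - 2 * c₂)⁻¹) /
            (2 * (1 - b ^ 2 * (1 - 2 * c₁)⁻¹ * (1 - 2 * c₂)⁻¹))) := by
  -- ae-measurability of Y and Z
  have hY' : AEMeasurable Y P := by
    by_contra h
    rw [Measure.map_of_not_aemeasurable h] at hY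
    have h1 : (0 : Measure ℝ) Set.univ = (gaussianReal 0 1) Set.univ := by rw [hY]
    simp [measure_univ] at h1
  have hZ' : AEMeasurable Z P := by
    by_contra h
    rw [Measure.map_of_not_aemeasurable h] at hZ
    have h1 : (0 : Measure ℝ) Set.univ = (gaussianReal 0 1) Set.univ := by rw [hZ]
    simp [measure_univ] at h1
  set γ := gaussianReal 0 1 with hγ
  have hmap : P.map (fun ω => (Y ω, Z ω)) = γ.prod γ := by
    exact ((indepFun_iff_map_prod_eq_prod_map_map hY' hZ').mp hIndep).trans (by rw [hY, hZ])
  have hu : (0:ℝ) < 1 - 2*c₁ := by linarith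
  have hv : (0:ℝ) < 1 - 2*c₂ := by linarith
  have hv' : (1:ℝ) - 2*c₂ ≠ 0 := hv.ne'
  have hu' : (1:ℝ) - 2*c₁ ≠ 0 := hu.ne'
  have hD : (0:ℝ) < 1 - b^2 * (1-2*c₁)⁻¹ * (1-2*c₂)⁻¹ := by
    have h2 : b^2 * (1-2*c₁)⁻¹ * (1-2*c₂)⁻¹ < 1 := by
      rw [mul_assoc, ← mul_inv, ← div_eq_mul_inv, div_lt_one (by positivity)]
      exact hb
    linarith
  set f : ℝ × ℝ → ℝ := fun p =>
    Real.exp (a₁ * p.1 + a₂ * p.2 + b * p.1 * p.2 + c₁ * p.1 ^ 2 + c₂ * p.2 ^ 2) with hf_def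
  have hfc : Continuous f := by
    rw [hf_def]; fun_prop
  -- change of variables
  have step1 : ∫ ω, Real.exp (a₁ * Y ω + a₂ * Z ω + b * Y ω * Z ω +
      c₁ * Y ω ^ 2 + c₂ * Z ω ^ 2) ∂P = ∫ p, f p ∂(γ.prod γ) := by
    rw [← hmap, integral_map (hY'.prodMk hZ') hfc.aestronglyMeasurable]
  rw [step1]
  -- to lintegral
  have hnn : 0 ≤ᵐ[γ.prod γ] f := Filter.Eventually.of_forall fun p => (Real.exp_pos _).le
  rw [integral_eq_lintegral_of_nonneg_ae hnn hfc.aestronglyMeasurable]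
  have hm : AEMeasurable (fun p => ENNReal.ofReal (f p)) (γ.prod γ) :=
    (ENNReal.measurable_ofReal.comp hfc.measurable).aemeasurable
  rw [lintegral_prod _ hm]
  -- inner integral
  set α' : ℝ := a₁ + a₂*b/(1-2*c₂) with hα'
  set c' : ℝ := c₁ + b^2/(2*(1-2*c₂)) with hc'def
  have hc' : 2 * c' < 1 := by
    have h3 : b^2/(1-2*c₂) < 1-2*c₁ := (div_lt_iff₀ hv).mpr hb
    have e : 2*(b^2/(2*(1-2*c₂))) = b^2/(1-2*c₂) := by
      field_simp
    rw [hc'def]; linarith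
  have inner : ∀ y : ℝ, ∫⁻ z, ENNReal.ofReal (f (y, z)) ∂γ =
      ENNReal.ofReal (((1-2*c₂) ^ (-(1:ℝ)/2) * Real.exp (a₂^2/(2*(1-2*c₂)))) *
        Real.exp (α' * y + c' * y^2)) := by
    intro y
    have hsplit : ∀ z : ℝ, f (y, z) =
        Real.exp (a₁*y + c₁*y^2) * Real.exp ((a₂ + b*y)*z + c₂*z^2) := by
      intro z
      have h0 : f (y, z) = Real.exp (a₁ * y + a₂ * z + b * y * z + c₁ * y ^ 2 + c₂ * z ^ 2) := rfl
      rw [h0, ← Real.exp_add]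
      congr 1
      ring
    simp_rw [hsplit, ENNReal.ofReal_mul (Real.exp_pos _).le]
    rw [lintegral_const_mul' _ _ ENNReal.ofReal_ne_top, lintegral_gauss_quad hc₂ (a₂ + b*y),
      ← ENNReal.ofReal_mul (Real.exp_pos _).le]
    congr 1
    rw [mul_left_comm, ← Real.exp_add, mul_assoc, ← Real.exp_add]
    congr 2
    rw [hα', hc'def]
    field_simp
    ring
  rw [lintegral_congr inner]
  have hK : (0:ℝ) ≤ (1-2*c₂) ^ (-(1:ℝ)/2) * Real.exp (a₂^2/(2*(1-2*c₂))) := by positivity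
  simp_rw [ENNReal.ofReal_mul hK]
  rw [lintegral_const_mul' _ _ ENNReal.ofReal_ne_top, lintegral_gauss_quad hc' α',
    ← ENNReal.ofReal_mul hK]
  have h2c' : (0:ℝ) < 1 - 2*c' := by
    rw [show (1:ℝ) - 2*c' = (1-2*c₁) * (1 - b^2 * (1-2*c₁)⁻¹ * (1-2*c₂)⁻¹) by
      rw [hc'def]; field_simp; ring]
    positivity
  rw [ENNReal.toReal_ofReal (mul_nonneg hK (mul_nonneg (Real.rpow_nonneg h2c'.le _)
    (Real.exp_pos _).le))]
  -- final algebra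
  have huD : 1 - 2*c' = (1-2*c₁) * (1 - b^2 * (1-2*c₁)⁻¹ * (1-2*c₂)⁻¹) := by
    rw [hc'def]
    field_simp
    ring
  have hD' : (1:ℝ) - b^2*(1-2*c₁)⁻¹*(1-2*c₂)⁻¹ ≠ 0 := hD.ne'
  have hexp : a₂^2/(2*(1-2*c₂)) + α'^2 /
      (2*((1-2*c₁) * (1 - b^2*(1-2*c₁)⁻¹*(1-2*c₂)⁻¹))) =
    (a₁^2*(1-2*c₁)⁻¹ + a₂^2*(1-2*c₂)⁻¹ + 2*a₁*a₂*b*(1-2*c₁)⁻¹*(1-2*c₂)⁻¹) /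
      (2*(1 - b^2*(1-2*c₁)⁻¹*(1-2*c₂)⁻¹)) := by
    rw [hα']
    have hw : (1-2*c₁)*(1-2*c₂) - b^2 ≠ 0 := by
      intro h
      apply hD'
      field_simp
      linarith [h]
    field_simp
    have hw3 : (1 - 2 * c₂) * (1 - 2 * c₁) - b ^ 2 ≠ 0 := by rw [mul_comm]; exact hw
    field_simp
    ring
  rw [huD, Real.mul_rpow hu.le hD.le, ← hexp, Real.exp_add]
  ring
end

section
/- Let u, v ∈ ℝ, Δ > 0 and θ₀ ∈ ℝ with θ₀²Δ² < 1. Let W_i, W_j be independent standard normal random variables and set Λ_i = u/2 + Δ^{1/2}W_i and Λ_j = v/2 − Δ^{1/2}W_j. Then E[exp(θ₀ Λ_i Λ_j)] = (1 − θ₀²Δ²)^{−1/2} · exp( θ₁·u·v + η₁·u² + η₁·v² ), where θ₁ = θ₀ / (4(1−θ₀²Δ²)) and η₁ = θ₀²Δ / (8(1−θ₀²Δ²)). -/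
open MeasureTheory ProbabilityTheory

open Real
open scoped ENNReal NNReal


lemma exp_quad_integrable (p q : ℝ) (hp : 0 < p) :
    Integrable (fun x : ℝ => Real.exp (-p * x ^ 2 + q * x)) := by
  have hfun : (fun x : ℝ => Real.exp (-p * x ^ 2 + q * x)) =
      fun x : ℝ => Real.exp (q ^ 2 / (4 * p)) * Real.exp (-p * (x - q / (2 * p)) ^ 2) := by
    funext x
    rw [← Real.exp_add]
    congr 1
    field_simp
    ring
  rw [hfun]
  exact ((integrable_exp_neg_mul_sq hp).comp_sub_right (q / (2 * p))).const_mul _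

lemma exp_quad_integral (p q : ℝ) (hp : 0 < p) :
    ∫ x : ℝ, Real.exp (-p * x ^ 2 + q * x) =
      Real.sqrt (π / p) * Real.exp (q ^ 2 / (4 * p)) := by
  have hfun : (fun x : ℝ => Real.exp (-p * x ^ 2 + q * x)) =
      fun x : ℝ => Real.exp (q ^ 2 / (4 * p)) * Real.exp (-p * (x - q / (2 * p)) ^ 2) := by
    funext x
    rw [← Real.exp_add]
    congr 1
    field_simp
    ring
  rw [hfun, MeasureTheory.integral_const_mul,
    MeasureTheory.integral_sub_right_eq_self (fun x => Real.exp (-p * x ^ 2)) (q / (2 * p)),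
    integral_gaussian]
  ring

lemma gaussianReal01_eq :
    gaussianReal 0 1 = volume.withDensity
      (fun x => ((gaussianPDFReal 0 1 x).toNNReal : ℝ≥0∞)) := by
  rw [gaussianReal_of_var_ne_zero 0 one_ne_zero]
  rfl

lemma integral_gaussianReal_smul (g : ℝ → ℝ) :
    ∫ x, g x ∂(gaussianReal 0 1) = ∫ x, gaussianPDFReal 0 1 x * g x := by
  rw [gaussianReal01_eq, integral_withDensity_eq_integral_smul
    (measurable_gaussianPDFReal 0 1).real_toNNReal g]
  congr 1
  funext x
  rw [NNReal.smul_def, Real.coe_toNNReal _ (gaussianPDFReal_nonneg 0 1 x), smul_eq_mul]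

lemma integrable_gaussianReal_iff (g : ℝ → ℝ) :
    Integrable g (gaussianReal 0 1) ↔
      Integrable (fun x => gaussianPDFReal 0 1 x • g x) volume := by
  rw [gaussianReal01_eq,
    integrable_withDensity_iff_integrable_smul (measurable_gaussianPDFReal 0 1).real_toNNReal]
  have : ∀ x : ℝ, (gaussianPDFReal 0 1 x).toNNReal • g x = gaussianPDFReal 0 1 x • g x := by
    intro x
    rw [NNReal.smul_def, Real.coe_toNNReal _ (gaussianPDFReal_nonneg 0 1 x)]
  simp_rw [this]

lemma pdf_mul_exp (a b x : ℝ) :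
    gaussianPDFReal 0 1 x * Real.exp (a * x ^ 2 + b * x) =
      (Real.sqrt (2 * π))⁻¹ * Real.exp (-(1/2 - a) * x ^ 2 + b * x) := by
  simp only [gaussianPDFReal, NNReal.coe_one, mul_one, sub_zero]
  rw [mul_assoc, ← Real.exp_add]
  congr 2
  ring

lemma gauss_quad_integrable {a : ℝ} (b : ℝ) (ha : a < 1/2) :
    Integrable (fun x => Real.exp (a * x ^ 2 + b * x)) (gaussianReal 0 1) := by
  rw [integrable_gaussianReal_iff]
  simp only [smul_eq_mul, pdf_mul_exp]
  exact (exp_quad_integrable (1/2 - a) b (by linarith)).const_mul _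

lemma gauss_quad {a : ℝ} (b : ℝ) (ha : a < 1/2) :
    ∫ x, Real.exp (a * x ^ 2 + b * x) ∂(gaussianReal 0 1) =
      (Real.sqrt (1 - 2 * a))⁻¹ * Real.exp (b ^ 2 / (2 * (1 - 2 * a))) := by
  have hp : (0:ℝ) < 1/2 - a := by linarith
  rw [integral_gaussianReal_smul]
  simp only [pdf_mul_exp]
  rw [MeasureTheory.integral_const_mul, exp_quad_integral _ b hp]
  have h1 : π / (1/2 - a) = (2 * π) / (1 - 2*a) := by
    rw [div_eq_div_iff (by linarith) (by linarith)]; ring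
  have h2 : Real.sqrt (π / (1/2 - a)) = Real.sqrt (2*π) / Real.sqrt (1 - 2*a) := by
    rw [h1, Real.sqrt_div (by positivity)]
  have h3 : b ^ 2 / (4 * (1/2 - a)) = b ^ 2 / (2 * (1 - 2*a)) := by
    congr 1; ring
  rw [h2, h3]
  have h4 : Real.sqrt (2*π) ≠ 0 := by positivity
  field_simp

lemma prod_integral_key (u v s θ₀ : ℝ) (hθ : θ₀ ^ 2 * (s ^ 2) ^ 2 < 1) :
    ∫ p : ℝ × ℝ, Real.exp (θ₀ * ((u / 2 + s * p.1) * (v / 2 - s * p.2)))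
        ∂((gaussianReal 0 1).prod (gaussianReal 0 1)) =
      (Real.sqrt (1 - θ₀ ^ 2 * (s ^ 2) ^ 2))⁻¹ *
        Real.exp ((θ₀ / (4 * (1 - θ₀ ^ 2 * (s ^ 2) ^ 2))) * u * v +
          (θ₀ ^ 2 * s ^ 2 / (8 * (1 - θ₀ ^ 2 * (s ^ 2) ^ 2))) * u ^ 2 +
          (θ₀ ^ 2 * s ^ 2 / (8 * (1 - θ₀ ^ 2 * (s ^ 2) ^ 2))) * v ^ 2) := by
  have hD : (0 : ℝ) < 1 - θ₀ ^ 2 * (s ^ 2) ^ 2 := by nlinarith [sq_nonneg (θ₀ * s * s)]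
  have ha₂ : θ₀ ^ 2 * (s ^ 2) ^ 2 / 2 < 1 / 2 := by linarith
  have hf_cont : Continuous
      (fun p : ℝ × ℝ => Real.exp (θ₀ * ((u / 2 + s * p.1) * (v / 2 - s * p.2)))) := by
    fun_prop
  have hsect : ∀ x : ℝ,
      (fun y => Real.exp (θ₀ * ((u / 2 + s * x) * (v / 2 - s * y)))) = fun y =>
      Real.exp (θ₀ * (u / 2 + s * x) * (v / 2)) *
        Real.exp ((0 : ℝ) * y ^ 2 + (-(θ₀ * s * (u / 2 + s * x))) * y) := by
    intro x
    funext y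
    rw [← Real.exp_add]
    congr 1
    ring
  have inner_int : ∀ x : ℝ,
      Integrable (fun y => Real.exp (θ₀ * ((u / 2 + s * x) * (v / 2 - s * y))))
        (gaussianReal 0 1) := by
    intro x
    rw [hsect x]
    exact (gauss_quad_integrable _ (by norm_num)).const_mul _
  have inner_val : ∀ x : ℝ,
      ∫ y, Real.exp (θ₀ * ((u / 2 + s * x) * (v / 2 - s * y))) ∂(gaussianReal 0 1) =
      Real.exp (θ₀ * u * v / 4 + θ₀ ^ 2 * s ^ 2 * u ^ 2 / 8) *
        Real.exp (θ₀ ^ 2 * (s ^ 2) ^ 2 / 2 * x ^ 2 +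
          (θ₀ * s * v / 2 + θ₀ ^ 2 * s ^ 2 * s * u / 2) * x) := by
    intro x
    rw [hsect x, MeasureTheory.integral_const_mul, gauss_quad _ (by norm_num : (0:ℝ) < 1/2)]
    norm_num
    rw [← Real.exp_add, ← Real.exp_add]
    congr 1
    ring
  have hint : Integrable
      (fun p : ℝ × ℝ => Real.exp (θ₀ * ((u / 2 + s * p.1) * (v / 2 - s * p.2))))
      ((gaussianReal 0 1).prod (gaussianReal 0 1)) := by
    rw [integrable_prod_iff hf_cont.aestronglyMeasurable]
    refine ⟨ae_of_all _ inner_int, ?_⟩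
    have hnorm : (fun x => ∫ y, ‖Real.exp (θ₀ * ((u / 2 + s * x) * (v / 2 - s * y)))‖
          ∂(gaussianReal 0 1)) =
        fun x => Real.exp (θ₀ * u * v / 4 + θ₀ ^ 2 * s ^ 2 * u ^ 2 / 8) *
          Real.exp (θ₀ ^ 2 * (s ^ 2) ^ 2 / 2 * x ^ 2 +
            (θ₀ * s * v / 2 + θ₀ ^ 2 * s ^ 2 * s * u / 2) * x) := by
      funext x
      simp only [Real.norm_eq_abs, Real.abs_exp]
      exact inner_val x
    rw [hnorm]
    exact (gauss_quad_integrable _ ha₂).const_mul _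
  rw [MeasureTheory.integral_prod _ hint]
  simp_rw [inner_val]
  rw [MeasureTheory.integral_const_mul, gauss_quad _ ha₂]
  have h12 : 1 - 2 * (θ₀ ^ 2 * (s ^ 2) ^ 2 / 2) = 1 - θ₀ ^ 2 * (s ^ 2) ^ 2 := by ring
  rw [h12, mul_left_comm]
  congr 1
  rw [← Real.exp_add]
  congr 1
  generalize hDd : 1 - θ₀ ^ 2 * (s ^ 2) ^ 2 = D at hD ⊢
  field_simp
  rw [← hDd]
  ring

set_option maxHeartbeats 800000 in
/-- **Corollary (conditional MGF of a product of one-level-finer Brownian increments).**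
Let `u, v ∈ ℝ`, `Δ > 0` and `θ₀` with `θ₀²Δ² < 1`. Let `W_i, W_j` be independent standard
normals and set `Λ_i = u/2 + Δ^{1/2} W_i`, `Λ_j = v/2 − Δ^{1/2} W_j`. Then
`E[exp(θ₀ Λ_i Λ_j)] = (1 − θ₀²Δ²)^{−1/2} exp(θ₁ u v + η₁ u² + η₁ v²)` with
`θ₁ = θ₀/(4(1−θ₀²Δ²))` and `η₁ = θ₀²Δ/(8(1−θ₀²Δ²))`. -/
theorem conditional_mgf_fine_increments
    (u v Δ θ₀ : ℝ) (hΔ : 0 < Δ) (hθ : θ₀ ^ 2 * Δ ^ 2 < 1)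
    {Ω : Type*} [MeasurableSpace Ω] (P : Measure Ω) [IsProbabilityMeasure P]
    (Wi Wj : Ω → ℝ)
    (hIndep : IndepFun Wi Wj P)
    (hWi : P.map Wi = gaussianReal 0 1)
    (hWj : P.map Wj = gaussianReal 0 1) :
    ∫ ω, Real.exp (θ₀ * ((u / 2 + Real.sqrt Δ * Wi ω) * (v / 2 - Real.sqrt Δ * Wj ω))) ∂P =
      (1 - θ₀ ^ 2 * Δ ^ 2) ^ (-(1 : ℝ) / 2) *
        Real.exp ((θ₀ / (4 * (1 - θ₀ ^ 2 * Δ ^ 2))) * u * v +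
          (θ₀ ^ 2 * Δ / (8 * (1 - θ₀ ^ 2 * Δ ^ 2))) * u ^ 2 +
          (θ₀ ^ 2 * Δ / (8 * (1 - θ₀ ^ 2 * Δ ^ 2))) * v ^ 2) := by
  have hne : (gaussianReal 0 1 : Measure ℝ) ≠ 0 := IsProbabilityMeasure.ne_zero _
  have hWi' : AEMeasurable Wi P := by
    by_contra h
    rw [Measure.map_of_not_aemeasurable h] at hWi
    exact hne hWi.symm
  have hWj' : AEMeasurable Wj P := by
    by_contra h
    rw [Measure.map_of_not_aemeasurable h] at hWj
    exact hne hWj.symm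
  have hmap : P.map (fun ω => (Wi ω, Wj ω)) =
      (gaussianReal 0 1).prod (gaussianReal 0 1) := by
    rw [(indepFun_iff_map_prod_eq_prod_map_map hWi' hWj').mp hIndep, hWi, hWj]
  have hf_cont : Continuous (fun p : ℝ × ℝ =>
      Real.exp (θ₀ * ((u / 2 + Real.sqrt Δ * p.1) * (v / 2 - Real.sqrt Δ * p.2)))) := by
    fun_prop
  have hstep : ∫ ω, Real.exp (θ₀ * ((u / 2 + Real.sqrt Δ * Wi ω) *
        (v / 2 - Real.sqrt Δ * Wj ω))) ∂P =
      ∫ p : ℝ × ℝ, Real.exp (θ₀ * ((u / 2 + Real.sqrt Δ * p.1) * (v / 2 - Real.sqrt Δ * p.2)))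
        ∂((gaussianReal 0 1).prod (gaussianReal 0 1)) := by
    rw [← hmap, integral_map (hWi'.prodMk hWj') hf_cont.aestronglyMeasurable]
  have hsq : Real.sqrt Δ ^ 2 = Δ := Real.sq_sqrt hΔ.le
  have hθ' : θ₀ ^ 2 * (Real.sqrt Δ ^ 2) ^ 2 < 1 := by rw [hsq]; exact hθ
  rw [hstep, prod_integral_key u v (Real.sqrt Δ) θ₀ hθ', hsq]
  have hD : (0 : ℝ) < 1 - θ₀ ^ 2 * Δ ^ 2 := by linarith
  congr 1
  rw [Real.sqrt_eq_rpow, neg_div, Real.rpow_neg hD.le, ← Real.rpow_natCast, ← Real.rpow_natCast]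
end
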